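/- arXiv:1903.07155 — 2 statements merged into one kernel-verified Lean document; each statement's English description precedes it below -/
import Mathlib

section
/- Given any 0 < α < β < 1, there is a set E ⊆ [0,1] such that {dim̄_Φ E : Φ is a dimension function with Φ(x) → 0 as x → 0} = [α, β], and moreover dim_qA E = α and dim_A E = β. -/
open Set Metric Filter Topology
open scoped ENNReal

noncomputable section

/-- The least number of closed balls of radius `r` needed to cover `E`
(`∞` if there is no finite cover). -/
def coverNumber {X : Type*} [PseudoMetricSpace X] (r : ℝ) (E : Set X) : ℝ≥0∞ :=
  ⨅ (s : Finset X) (_ : E ⊆ ⋃ x ∈ s, closedBall x r), (s.card : ℝ≥0∞)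

/-- `Φ : (0,1) → [0,∞)` is a dimension function if `x ^ (1 + Φ x)` decreases to `0`
as `x` decreases to `0`. -/
def IsDimensionFunction (Φ : ℝ → ℝ) : Prop :=
  (∀ x ∈ Ioo (0:ℝ) 1, 0 ≤ Φ x) ∧
  (∀ x ∈ Ioo (0:ℝ) 1, ∀ y ∈ Ioo (0:ℝ) 1, x ≤ y → x ^ (1 + Φ x) ≤ y ^ (1 + Φ y)) ∧
  Tendsto (fun x : ℝ => x ^ (1 + Φ x)) (nhdsWithin 0 (Ioo 0 1)) (nhds 0)

/-- A metric space is doubling if there is `M ≥ 1` such that every closed ball of radius `R`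
can be covered by at most `M` closed balls of radius `R / 2`. -/
def IsDoublingSpace (X : Type*) [PseudoMetricSpace X] : Prop :=
  ∃ M : ℕ, 1 ≤ M ∧ ∀ (x : X) (R : ℝ), ∃ s : Finset X, s.card ≤ M ∧
    closedBall x R ⊆ ⋃ y ∈ s, closedBall y (R / 2)

/-- The upper `Φ`-dimension. -/
def upperPhiDim {X : Type*} [PseudoMetricSpace X] (Φ : ℝ → ℝ) (E : Set X) : ℝ :=
  sInf {α : ℝ | ∃ c₁ > (0:ℝ), ∃ c₂ > (0:ℝ), ∀ r R : ℝ,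
    0 < r → r ≤ R ^ (1 + Φ R) → R ^ (1 + Φ R) ≤ R → R < c₁ → ∀ z ∈ E,
      coverNumber r (closedBall z R ∩ E) ≤ ENNReal.ofReal (c₂ * (R / r) ^ α)}

/-- The lower `Φ`-dimension. -/
def lowerPhiDim {X : Type*} [PseudoMetricSpace X] (Φ : ℝ → ℝ) (E : Set X) : ℝ :=
  sSup {α : ℝ | ∃ c₁ > (0:ℝ), ∃ c₂ > (0:ℝ), ∀ r R : ℝ,
    0 < r → r ≤ R ^ (1 + Φ R) → R ^ (1 + Φ R) ≤ R → R < c₁ → ∀ z ∈ E,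
      ENNReal.ofReal (c₂ * (R / r) ^ α) ≤ coverNumber r (closedBall z R ∩ E)}

/-- The (upper) Assouad dimension: the upper `Φ`-dimension with `Φ ≡ 0`. -/
def assouadDim {X : Type*} [PseudoMetricSpace X] (E : Set X) : ℝ :=
  upperPhiDim (fun _ => 0) E

/-- The lower Assouad dimension: the lower `Φ`-dimension with `Φ ≡ 0`. -/
def lowerAssouadDim {X : Type*} [PseudoMetricSpace X] (E : Set X) : ℝ :=
  lowerPhiDim (fun _ => 0) E

/-- The upper `θ`-Assouad spectrum: the upper `Φ`-dimension with constant `Φ = 1/θ - 1`. -/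
def upperAssouadSpectrum {X : Type*} [PseudoMetricSpace X] (θ : ℝ) (E : Set X) : ℝ :=
  upperPhiDim (fun _ => 1 / θ - 1) E

/-- The lower `θ`-Assouad spectrum: the lower `Φ`-dimension with constant `Φ = 1/θ - 1`. -/
def lowerAssouadSpectrum {X : Type*} [PseudoMetricSpace X] (θ : ℝ) (E : Set X) : ℝ :=
  lowerPhiDim (fun _ => 1 / θ - 1) E

/-- The upper quasi-Assouad dimension, `lim_{θ → 1}` of the upper `θ`-Assouad spectrum;
since the upper spectrum is nondecreasing in `θ`, this limit is the supremum over
`θ ∈ (0,1)`. -/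
def quasiAssouadDim {X : Type*} [PseudoMetricSpace X] (E : Set X) : ℝ :=
  ⨆ θ : Ioo (0:ℝ) 1, upperAssouadSpectrum (θ : ℝ) E

/-- The lower quasi-Assouad dimension, `lim_{θ → 1}` of the lower `θ`-Assouad spectrum;
since the lower spectrum is nonincreasing in `θ`, this limit is the infimum over
`θ ∈ (0,1)`. -/
def quasiLowerAssouadDim {X : Type*} [PseudoMetricSpace X] (E : Set X) : ℝ :=
  ⨅ θ : Ioo (0:ℝ) 1, lowerAssouadSpectrum (θ : ℝ) E

/-- Upper box dimension `limsup_{r → 0} log N_r(E) / |log r|`. -/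
def upperBoxDim {X : Type*} [PseudoMetricSpace X] (E : Set X) : ℝ :=
  limsup (fun r : ℝ => Real.log (coverNumber r E).toReal / |Real.log r|)
    (nhdsWithin 0 (Ioo 0 1))

/-- Lower box dimension `liminf_{r → 0} log N_r(E) / |log r|`. -/
def lowerBoxDim {X : Type*} [PseudoMetricSpace X] (E : Set X) : ℝ :=
  liminf (fun r : ℝ => Real.log (coverNumber r E).toReal / |Real.log r|)
    (nhdsWithin 0 (Ioo 0 1))



set_option linter.unusedSectionVars false
set_option linter.unusedVariables false
set_option maxHeartbeats 1000000

namespace PhiDimProof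
open Real Filter
open scoped Classical


/-- block start levels -/
def nblk : ℕ → ℕ
  | 0 => 16
  | k+1 => 2 ^ nblk k

def endblk (k : ℕ) : ℕ := nblk k + (k + 1)

def InBlock (i : ℕ) : Prop := ∃ k, nblk k ≤ i ∧ i < endblk k

lemma lt_two_pow' (q : ℕ) : q < 2 ^ q := Nat.lt_two_pow_self

lemma two_q3 : ∀ q, 16 ≤ q → 2 * q ^ 3 ≤ 2 ^ q := by
  intro q hq
  induction q with
  | zero => omega
  | succ n ih =>
    rcases Nat.lt_or_ge n 16 with h | h
    · have hn : n = 15 := by omega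
      subst hn; norm_num
    · have h1 := ih (by omega)
      have h2 : 2 * (n + 1) ^ 3 ≤ 2 * (2 * n ^ 3) := by nlinarith [h, sq_nonneg n]
      calc 2 * (n+1)^3 ≤ 2 * (2 * n^3) := h2
        _ ≤ 2 * 2 ^ n := by omega
        _ = 2 ^ (n+1) := by ring

lemma M_linear_le_pow (M k : ℕ) (h : 4 * M + 4 ≤ k) : M * (k + 1) ≤ 2 ^ k := by
  induction k with
  | zero => omega
  | succ n ih =>
    rcases Nat.lt_or_ge n (4 * M + 4) with h' | h'
    · have hn : n = 4 * M + 3 := by omega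
      subst hn
      have h1 : M + 1 ≤ 2 ^ M := lt_two_pow' M
      have h2 : 2 ^ (4 * M + 3 + 1) = 16 * (2 ^ M)^4 := by ring
      have h3 : 16 * (M + 1)^4 ≤ 16 * (2 ^ M)^4 := by
        have := Nat.pow_le_pow_left h1 4
        omega
      have h5 : (M+1)^2 ≤ (M+1)^4 := Nat.pow_le_pow_right (by omega) (by norm_num)
      have h4 : M * (4 * M + 3 + 1 + 1) ≤ 16 * (M+1)^4 := by nlinarith [h5]
      omega
    · have h1 := ih h'
      have hM : M ≤ 2 ^ n := le_trans (by nlinarith) h1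
      calc M * (n + 1 + 1) = M * (n+1) + M := by ring
        _ ≤ 2 ^ n + 2 ^ n := by omega
        _ = 2 ^ (n+1) := by ring

lemma nblk_ge (k : ℕ) : k + 16 ≤ nblk k := by
  induction k with
  | zero => simp [nblk]
  | succ n ih =>
    have : nblk n < 2 ^ nblk n := lt_two_pow' _
    simp only [nblk]; omega

lemma nblk_pow_ge (k : ℕ) : 2 ^ (k + 4) ≤ nblk k := by
  induction k with
  | zero => simp [nblk]
  | succ n ih =>
    have h1 : n + 5 ≤ nblk n := by have := nblk_ge n; omega
    simp only [nblk]
    exact Nat.pow_le_pow_right (by norm_num) h1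

lemma growth (k : ℕ) : endblk k + (k + 3) ^ 3 ≤ nblk (k + 1) := by
  have hn := nblk_ge k
  have h16 : 16 ≤ nblk k := by omega
  have h1 : 2 * (nblk k) ^ 3 ≤ 2 ^ (nblk k) := two_q3 _ h16
  have h2 : endblk k + (k+3)^3 ≤ 2 * (nblk k) ^ 3 := by
    simp only [endblk]
    have ha : (k+3)^3 ≤ (nblk k)^3 := Nat.pow_le_pow_left (by omega) 3
    have hq2 : 16 * nblk k ≤ (nblk k) ^ 2 := by nlinarith
    have hq3 : (nblk k)^2 ≤ (nblk k)^3 := Nat.pow_le_pow_right (by omega) (by norm_num)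
    have hb : 2 * nblk k ≤ (nblk k)^3 := by omega
    omega
  simp only [nblk]; omega

lemma nblk_strictMono : StrictMono nblk := by
  apply strictMono_nat_of_lt_succ
  intro k
  have h := growth k
  have : 0 < (k+3)^3 := by positivity
  simp only [endblk] at *
  omega

lemma endblk_lt (k : ℕ) : endblk k < nblk (k + 1) := by
  have h := growth k
  have : 0 < (k+3)^3 := by positivity
  omega

lemma endblk_mono : Monotone endblk := by
  intro i j hij
  simp only [endblk]
  have := nblk_strictMono.monotone hij
  omega

lemma nblk_self_le (n : ℕ) : n ≤ nblk n := by have := nblk_ge n; omega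



noncomputable section

lemma log2_pos : 0 < Real.log 2 := Real.log_pos one_lt_two

def La (α : ℝ) : ℝ := Real.log 2 / α
def Lb (β : ℝ) : ℝ := Real.log 2 / β

noncomputable def lev (α β : ℝ) (i : ℕ) : ℝ := if InBlock i then Lb β else La α

def Tl (α β : ℝ) (m : ℕ) : ℝ := ∑ i ∈ Finset.range m, lev α β i

def sc (α β : ℝ) (m : ℕ) : ℝ := Real.exp (-(Tl α β m))

def bconst (β : ℝ) : ℝ := Real.exp (-(Lb β))

variable {α β : ℝ}

lemma hβ0 (hα : 0 < α) (hαβ : α < β) : 0 < β := lt_trans hα hαβ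

lemma Lb_pos (hα : 0 < α) (hαβ : α < β) : 0 < Lb β := div_pos log2_pos (hβ0 hα hαβ)

lemma La_pos (hα : 0 < α) : 0 < La α := div_pos log2_pos hα

lemma Lb_lt_La (hα : 0 < α) (hαβ : α < β) : Lb β < La α :=
  div_lt_div_of_pos_left log2_pos hα hαβ

lemma log2_lt_Lb (hα : 0 < α) (hαβ : α < β) (hβ : β < 1) : Real.log 2 < Lb β := by
  rw [Lb, lt_div_iff₀ (hβ0 hα hαβ)]
  nlinarith [log2_pos, hβ0 hα hαβ]

lemma lev_cases (i : ℕ) : lev α β i = La α ∨ lev α β i = Lb β := by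
  unfold lev; split <;> simp

lemma Lb_le_lev (hα : 0 < α) (hαβ : α < β) (i : ℕ) : Lb β ≤ lev α β i := by
  rcases lev_cases (α := α) (β := β) i with h | h <;> rw [h]
  exact le_of_lt (Lb_lt_La hα hαβ)

lemma lev_le_La (hα : 0 < α) (hαβ : α < β) (i : ℕ) : lev α β i ≤ La α := by
  rcases lev_cases (α := α) (β := β) i with h | h <;> rw [h]
  exact le_of_lt (Lb_lt_La hα hαβ)

lemma lev_pos (hα : 0 < α) (hαβ : α < β) (i : ℕ) : 0 < lev α β i :=
  lt_of_lt_of_le (Lb_pos hα hαβ) (Lb_le_lev hα hαβ i)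

lemma Tl_succ (m : ℕ) : Tl α β (m+1) = Tl α β m + lev α β m :=
  Finset.sum_range_succ _ _

lemma Tl_diff (n m : ℕ) (h : n ≤ m) :
    Tl α β m - Tl α β n = ∑ i ∈ Finset.Ico n m, lev α β i := by
  rw [Tl, Tl, ← Finset.sum_Ico_eq_sub _ h]

lemma Tl_ge (hα : 0 < α) (hαβ : α < β) (m : ℕ) : (m : ℝ) * Lb β ≤ Tl α β m := by
  rw [Tl]
  calc (m:ℝ) * Lb β = ∑ _i ∈ Finset.range m, Lb β := by
        rw [Finset.sum_const, Finset.card_range, nsmul_eq_mul]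
    _ ≤ _ := Finset.sum_le_sum (fun i _ => Lb_le_lev hα hαβ i)

lemma Tl_nonneg (hα : 0 < α) (hαβ : α < β) (m : ℕ) : 0 ≤ Tl α β m := by
  have h1 := Tl_ge hα hαβ m
  have h2 := Lb_pos hα hαβ
  nlinarith [Nat.cast_nonneg (α := ℝ) m]

lemma Tl_strictMono (hα : 0 < α) (hαβ : α < β) : StrictMono (Tl α β) := by
  apply strictMono_nat_of_lt_succ
  intro m
  rw [Tl_succ]
  nlinarith [lev_pos hα hαβ m]

lemma Tl_diff_le (hα : 0 < α) (hαβ : α < β) (n m : ℕ) (h : n ≤ m) :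
    Tl α β m - Tl α β n ≤ ((m - n : ℕ) : ℝ) * La α := by
  rw [Tl_diff _ _ h]
  calc ∑ i ∈ Finset.Ico n m, lev α β i ≤ ∑ _i ∈ Finset.Ico n m, La α :=
        Finset.sum_le_sum (fun i _ => lev_le_La hα hαβ i)
    _ = ((m - n : ℕ):ℝ) * La α := by
        rw [Finset.sum_const, Nat.card_Ico, nsmul_eq_mul]

lemma Tl_diff_ge (hα : 0 < α) (hαβ : α < β) (n m : ℕ) (h : n ≤ m) :
    ((m - n : ℕ) : ℝ) * Lb β ≤ Tl α β m - Tl α β n := by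
  rw [Tl_diff _ _ h]
  calc ((m - n : ℕ):ℝ) * Lb β = ∑ _i ∈ Finset.Ico n m, Lb β := by
        rw [Finset.sum_const, Nat.card_Ico, nsmul_eq_mul]
    _ ≤ _ := Finset.sum_le_sum (fun i _ => Lb_le_lev hα hαβ i)

lemma sc_pos (m : ℕ) : 0 < sc α β m := Real.exp_pos _

lemma sc_le_one (hα : 0 < α) (hαβ : α < β) (m : ℕ) : sc α β m ≤ 1 := by
  rw [sc, Real.exp_le_one_iff]
  simp [Tl_nonneg hα hαβ m]

lemma sc_zero : sc α β 0 = 1 := by simp [sc, Tl]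

lemma sc_anti (hα : 0 < α) (hαβ : α < β) : StrictAnti (sc α β) := by
  intro i j hij
  exact Real.exp_lt_exp.mpr (by simp [Tl_strictMono hα hαβ hij])

lemma sc_succ (m : ℕ) : sc α β (m+1) = sc α β m * Real.exp (-(lev α β m)) := by
  rw [sc, sc, Tl_succ, ← Real.exp_add]; ring_nf

lemma bconst_pos : 0 < bconst β := Real.exp_pos _

lemma bconst_lt_half (hα : 0 < α) (hαβ : α < β) (hβ : β < 1) : bconst β < 1/2 := by
  rw [bconst]
  have h := log2_lt_Lb hα hαβ hβ
  calc Real.exp (-(Lb β)) < Real.exp (-(Real.log 2)) := Real.exp_lt_exp.mpr (by linarith)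
    _ = 1/2 := by
        rw [Real.exp_neg, Real.exp_log (by norm_num : (0:ℝ) < 2)]
        norm_num

lemma sc_ratio (hα : 0 < α) (hαβ : α < β) (n m : ℕ) (h : n ≤ m) :
    sc α β m ≤ sc α β n * bconst β ^ (m - n) := by
  rw [sc, sc, bconst, ← Real.exp_nat_mul, ← Real.exp_add]
  rw [Real.exp_le_exp]
  have h2 := Tl_diff_ge hα hαβ n m h
  nlinarith [h2]

lemma sc_tendsto (hα : 0 < α) (hαβ : α < β) (hβ : β < 1) :
    Tendsto (sc α β) atTop (nhds 0) := by
  have h1 : Tendsto (fun m : ℕ => bconst β ^ m) atTop (nhds 0) :=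
    tendsto_pow_atTop_nhds_zero_of_lt_one (le_of_lt (bconst_pos (β := β))) (by
      have := bconst_lt_half hα hαβ hβ; linarith)
  apply squeeze_zero (fun m => le_of_lt (sc_pos m)) (fun m => ?_) h1
  have h2 := sc_ratio hα hαβ 0 m (Nat.zero_le m)
  simpa [sc_zero] using h2

lemma exists_sc_lt (hα : 0 < α) (hαβ : α < β) (hβ : β < 1) (R : ℝ) (hR : 0 < R) :
    ∃ m, sc α β m < R :=
  ((sc_tendsto hα hαβ hβ).eventually_lt_const hR).exists

-- ==== Part 4 : abstract covering lemmas ====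

lemma coverNumber_le_card {X : Type*} [PseudoMetricSpace X] (r : ℝ) (S : Set X)
    (t : Finset X) (h : S ⊆ ⋃ x ∈ t, closedBall x r) :
    coverNumber r S ≤ t.card := by
  exact iInf_le_of_le t (iInf_le_of_le h le_rfl)

lemma card_le_coverNumber {X : Type*} [PseudoMetricSpace X] (r : ℝ) (S : Set X)
    (t : Finset X) (ht : ↑t ⊆ S)
    (hsep : ∀ x ∈ t, ∀ y ∈ t, x ≠ y → 2 * r < dist x y) :
    (t.card : ℝ≥0∞) ≤ coverNumber r S := by
  refine le_iInf fun u => le_iInf fun hu => ?_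
  have hcard : t.card ≤ u.card := by
    by_contra hlt
    push_neg at hlt
    set f : X → X := fun x => if h : ∃ y ∈ u, x ∈ closedBall y r then h.choose else x with hf
    have hfmem : ∀ x ∈ t, f x ∈ u ∧ x ∈ closedBall (f x) r := by
      intro x hx
      have hxS : x ∈ S := ht hx
      have hex : ∃ y ∈ u, x ∈ closedBall y r := by
        have := hu hxS
        simpa using this
      simp only [hf, dif_pos hex]
      exact ⟨hex.choose_spec.1, hex.choose_spec.2⟩
    obtain ⟨x, hx, y, hy, hxy, hfxy⟩ :=
      Finset.exists_ne_map_eq_of_card_lt_of_maps_to hlt (fun x hx => (hfmem x hx).1)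
    have h1 := (hfmem x hx).2
    have h2 := (hfmem y hy).2
    rw [mem_closedBall] at h1 h2
    have := hsep x hx y hy hxy
    have hd : dist x y ≤ 2 * r := by
      calc dist x y ≤ dist x (f x) + dist (f x) y := dist_triangle _ _ _
        _ = dist x (f x) + dist y (f y) := by rw [hfxy, dist_comm (f y) y]
        _ ≤ 2 * r := by linarith
    linarith
  exact_mod_cast hcard

-- ==== Part 3 : Cantor construction (using abstract sc) ====

variable (sc : ℕ → ℝ)

def gap (m : ℕ) : ℝ := sc m - sc (m + 1)

def cpt (ε : ℕ → Bool) : ℝ := ∑' i, (if ε i then gap sc i else 0)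

def ESet : Set ℝ := Set.range (cpt sc)

def Nice (sc : ℕ → ℝ) (bb : ℝ) : Prop :=
  (∀ m, 0 < sc m) ∧ StrictAnti sc ∧ sc 0 = 1 ∧ Tendsto sc atTop (nhds 0) ∧
    0 ≤ bb ∧ bb < 1/2 ∧ ∀ m, sc (m+1) ≤ bb * sc m

variable {sc} {bb : ℝ}
variable (hsc : Nice sc bb)

section basic
include hsc

lemma hpos : ∀ m, 0 < sc m := hsc.1
lemma hanti : StrictAnti sc := hsc.2.1
lemma h0' : sc 0 = 1 := hsc.2.2.1
lemma hlim : Tendsto sc atTop (nhds 0) := hsc.2.2.2.1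
lemma hbb0 : 0 ≤ bb := hsc.2.2.2.2.1
lemma hbb2 : bb < 1/2 := hsc.2.2.2.2.2.1
lemma hratio : ∀ m, sc (m+1) ≤ bb * sc m := hsc.2.2.2.2.2.2


lemma gap_nonneg (m : ℕ) : 0 ≤ gap sc m := by
  have := hanti hsc (Nat.lt_succ_self m)
  simp only [gap]; linarith

lemma term_le (ε : ℕ → Bool) (i : ℕ) :
    (if ε i then gap sc i else 0) ≤ gap sc i := by
  split
  · exact le_rfl
  · exact gap_nonneg hsc i

lemma term_nonneg (ε : ℕ → Bool) (i : ℕ) : 0 ≤ (if ε i then gap sc i else 0) := by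
  split
  · exact gap_nonneg hsc i
  · exact le_rfl

omit hsc in
lemma sum_range_gap (N j : ℕ) :
    ∑ i ∈ Finset.range j, gap sc (i + N) = sc N - sc (j + N) := by
  have h1 := Finset.sum_range_sub' (fun i => sc (i + N)) j
  simp only [Nat.succ_add] at h1
  have h2 : ∀ i : ℕ, gap sc (i + N) = sc (i + N) - sc (i + N + 1) := fun i => rfl
  simp only [h2]
  rw [h1, Nat.zero_add]

lemma hasSum_gap_tail (N : ℕ) : HasSum (fun i => gap sc (i + N)) (sc N) := by
  have hsum : Summable (fun i => gap sc (i + N)) := by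
    apply summable_of_sum_range_le (c := sc N) (fun i => gap_nonneg hsc _)
    intro j
    rw [sum_range_gap]
    have := (hpos hsc (j + N)).le
    linarith
  rw [hsum.hasSum_iff_tendsto_nat]
  simp only [sum_range_gap]
  have h1 : Tendsto (fun j => sc (j + N)) atTop (nhds 0) :=
    (hlim hsc).comp (tendsto_atTop_atTop_of_monotone (fun a b hab => by omega)
      (fun c => ⟨c, by omega⟩))
  have h2 : Tendsto (fun j => sc N - sc (j + N)) atTop (nhds (sc N - 0)) :=
    tendsto_const_nhds.sub h1
  simpa using h2

lemma summable_gap_tail (N : ℕ) : Summable (fun i => gap sc (i + N)) :=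
  (hasSum_gap_tail hsc N).summable

lemma summable_term (ε : ℕ → Bool) :
    Summable (fun i => if ε i then gap sc i else 0) := by
  apply Summable.of_nonneg_of_le (term_nonneg hsc ε) (term_le hsc ε)
  simpa using summable_gap_tail hsc 0

lemma summable_term_tail (ε : ℕ → Bool) (N : ℕ) :
    Summable (fun i => if ε (i + N) then gap sc (i + N) else 0) := by
  apply Summable.of_nonneg_of_le (fun i => term_nonneg hsc _ _)
    (fun i => term_le hsc _ _) (summable_gap_tail hsc N)

lemma tail_nonneg (ε : ℕ → Bool) (N : ℕ) :
    0 ≤ ∑' i, (if ε (i + N) then gap sc (i + N) else 0) :=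
  tsum_nonneg (fun i => term_nonneg hsc _ _)

lemma tail_le (ε : ℕ → Bool) (N : ℕ) :
    ∑' i, (if ε (i + N) then gap sc (i + N) else 0) ≤ sc N := by
  calc ∑' i, (if ε (i + N) then gap sc (i + N) else 0)
      ≤ ∑' i, gap sc (i + N) :=
        Summable.tsum_le_tsum (fun i => term_le hsc _ _)
          (summable_term_tail hsc ε N) (summable_gap_tail hsc N)
    _ = sc N := (hasSum_gap_tail hsc N).tsum_eq

lemma cpt_split (ε : ℕ → Bool) (N : ℕ) :
    cpt sc ε = (∑ i ∈ Finset.range N, (if ε i then gap sc i else 0))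
      + ∑' i, (if ε (i + N) then gap sc (i + N) else 0) := by
  rw [cpt]
  exact (Summable.sum_add_tsum_nat_add N (summable_term hsc ε)).symm

lemma cpt_nonneg (ε : ℕ → Bool) : 0 ≤ cpt sc ε :=
  tsum_nonneg (fun i => term_nonneg hsc ε i)

lemma cpt_le_one (ε : ℕ → Bool) : cpt sc ε ≤ 1 := by
  have h := tail_le hsc ε 0
  rw [h0' hsc] at h
  rw [cpt]
  simpa using h

/-- distance bound when two digit sequences agree below `N` -/
lemma dist_le_of_agree (ε ε' : ℕ → Bool) (N : ℕ) (h : ∀ i, i < N → ε i = ε' i) :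
    |cpt sc ε - cpt sc ε'| ≤ sc N := by
  rw [cpt_split hsc ε N, cpt_split hsc ε' N]
  have hpref : ∑ i ∈ Finset.range N, (if ε i then gap sc i else 0)
      = ∑ i ∈ Finset.range N, (if ε' i then gap sc i else 0) := by
    apply Finset.sum_congr rfl
    intro i hi
    rw [h i (Finset.mem_range.mp hi)]
  rw [hpref]
  have h1 := tail_nonneg hsc ε N
  have h2 := tail_nonneg hsc ε' N
  have h3 := tail_le hsc ε N
  have h4 := tail_le hsc ε' N
  rw [abs_le]
  constructor <;> nlinarith

/-- separation bound at the first differing digit -/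
lemma dist_ge_of_first_diff (ε ε' : ℕ → Bool) (N : ℕ)
    (h : ∀ i, i < N → ε i = ε' i) (hN : ε N ≠ ε' N) :
    sc N - 2 * sc (N + 1) ≤ |cpt sc ε - cpt sc ε'| := by
  -- wlog ε N = true
  wlog hεN : ε N = true generalizing ε ε'
  · have hε'N : ε' N = true := by
      cases hεN' : ε' N
      · cases hεN'' : ε N
        · exact absurd (hεN'.symm ▸ hεN'' : ε N = ε' N) hN
        · exact absurd hεN'' hεN
      · rfl
    rw [abs_sub_comm]
    exact this ε' ε (fun i hi => (h i hi).symm) (Ne.symm hN) hε'N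
  have hε'N : ε' N = false := by
    cases hε'N' : ε' N
    · rfl
    · exact absurd (hεN.trans hε'N'.symm) hN
  rw [cpt_split hsc ε (N+1), cpt_split hsc ε' (N+1)]
  have hpref : ∑ i ∈ Finset.range (N+1), (if ε i then gap sc i else 0)
      = (∑ i ∈ Finset.range N, (if ε' i then gap sc i else 0)) + gap sc N := by
    rw [Finset.sum_range_succ, hεN]
    simp only [if_true]
    congr 1
    apply Finset.sum_congr rfl
    intro i hi
    rw [h i (Finset.mem_range.mp hi)]
  have hpref' : ∑ i ∈ Finset.range (N+1), (if ε' i then gap sc i else 0)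
      = ∑ i ∈ Finset.range N, (if ε' i then gap sc i else 0) := by
    rw [Finset.sum_range_succ, hε'N]
    simp
  rw [hpref, hpref']
  have h1 := tail_nonneg hsc ε (N+1)
  have h2 := tail_nonneg hsc ε' (N+1)
  have h3 := tail_le hsc ε (N+1)
  have h4 := tail_le hsc ε' (N+1)
  have hgap : gap sc N = sc N - sc (N+1) := rfl
  refine le_trans ?_ (le_abs_self _)
  linarith

/-- separation with the uniform constant -/
lemma dist_ge_of_first_diff' (ε ε' : ℕ → Bool) (N : ℕ)
    (h : ∀ i, i < N → ε i = ε' i) (hN : ε N ≠ ε' N) :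
    (1 - 2*bb) * sc N ≤ |cpt sc ε - cpt sc ε'| := by
  have h1 := dist_ge_of_first_diff hsc ε ε' N h hN
  have h2 := hratio hsc N
  nlinarith [hpos hsc N]

omit hsc in
lemma first_diff {ε ε' : ℕ → Bool} (i₀ : ℕ) (h : ε i₀ ≠ ε' i₀) :
    ∃ N, N ≤ i₀ ∧ (∀ i, i < N → ε i = ε' i) ∧ ε N ≠ ε' N := by
  have hne : ∃ i, ε i ≠ ε' i := ⟨i₀, h⟩
  exact ⟨Nat.find hne, Nat.find_min' hne h,
    fun i hi => not_not.mp (Nat.find_min hne hi), Nat.find_spec hne⟩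

/-- Upper counting bound -/
lemma count_upper (ε : ℕ → Bool) (R r : ℝ) (n' m : ℕ) (hn'm : n' ≤ m) (hr : sc m ≤ r)
    (hR : 2 * R ≤ (1 - 2*bb) * sc n') :
    coverNumber r (closedBall (cpt sc ε) R ∩ ESet sc) ≤ (2:ℝ≥0∞) ^ (m - n') := by
  classical
  set d := m - n' with hd
  set g : (Fin d → Bool) → (ℕ → Bool) := fun w i =>
    if i < n' then ε i else if h : i - n' < d then w ⟨i - n', h⟩ else false with hg
  set t : Finset ℝ := Finset.image (fun w => cpt sc (g w)) Finset.univ with ht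
  have hcover : (closedBall (cpt sc ε) R ∩ ESet sc) ⊆ ⋃ x ∈ t, closedBall x r := by
    rintro y ⟨hyB, ε', rfl⟩
    have hagree : ∀ i, i < n' → ε' i = ε i := by
      by_contra hcon
      push_neg at hcon
      obtain ⟨i₀, hi₀, hne⟩ := hcon
      obtain ⟨N, hNle, hNagree, hNdiff⟩ := first_diff i₀ hne
      have hsep := dist_ge_of_first_diff' hsc ε' ε N hNagree hNdiff
      have hdist : dist (cpt sc ε') (cpt sc ε) ≤ R := mem_closedBall.mp hyB
      rw [Real.dist_eq] at hdist
      have hscle : sc n' ≤ sc N := (hanti hsc).antitone (le_trans hNle (le_of_lt hi₀))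
      have hpos1 : 0 < (1 - 2*bb) * sc N := by
        have := hbb2 (sc := sc) hsc
        have := hpos hsc N
        nlinarith
      have habs : 0 ≤ |cpt sc ε' - cpt sc ε| := abs_nonneg _
      have hb2 := hbb2 (sc := sc) hsc
      nlinarith
    set w : Fin d → Bool := fun j => ε' (n' + j) with hw
    refine Set.mem_iUnion₂.mpr ⟨cpt sc (g w), Finset.mem_image.mpr ⟨w, Finset.mem_univ w, rfl⟩, ?_⟩
    rw [mem_closedBall, Real.dist_eq]
    have hgag : ∀ i, i < m → ε' i = g w i := by
      intro i hi
      by_cases hin : i < n'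
      · simp only [hg, if_pos hin]
        exact hagree i hin
      · push_neg at hin
        have hid : i - n' < d := by omega
        simp only [hg, if_neg (not_lt.mpr hin), dif_pos hid]
        have : n' + (i - n') = i := by omega
        rw [hw]
        simp only [this]
    calc |cpt sc ε' - cpt sc (g w)| ≤ sc m := dist_le_of_agree hsc ε' (g w) m hgag
      _ ≤ r := hr
  have hcard := coverNumber_le_card r (closedBall (cpt sc ε) R ∩ ESet sc) t hcover
  refine le_trans hcard ?_
  have h1 : t.card ≤ 2 ^ d := by
    calc t.card ≤ (Finset.univ : Finset (Fin d → Bool)).card := Finset.card_image_le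
      _ = 2 ^ d := by simp
  calc (t.card : ℝ≥0∞) ≤ ((2 ^ d : ℕ) : ℝ≥0∞) := by exact_mod_cast h1
    _ = (2:ℝ≥0∞) ^ d := by push_cast; ring

/-- Lower counting bound -/
lemma count_lower (ε : ℕ → Bool) (R r : ℝ) (n m : ℕ) (hnm : n ≤ m) (hm : 1 ≤ m)
    (hn : sc n ≤ R) (hr : 2 * r < (1 - 2*bb) * sc (m-1)) :
    (2:ℝ≥0∞) ^ (m - n) ≤ coverNumber r (closedBall (cpt sc ε) R ∩ ESet sc) := by
  classical
  set d := m - n with hd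
  set g : (Fin d → Bool) → (ℕ → Bool) := fun w i =>
    if i < n then ε i else if h : i - n < d then w ⟨i - n, h⟩ else false with hg
  have key : ∀ w w' : Fin d → Bool, w ≠ w' →
      (1 - 2*bb) * sc (m-1) ≤ |cpt sc (g w) - cpt sc (g w')| := by
    intro w w' hww
    have hex : ∃ j : Fin d, w j ≠ w' j := by
      by_contra hc
      push_neg at hc
      exact hww (funext hc)
    obtain ⟨j, hj⟩ := hex
    have hdiff : g w (n + (j:ℕ)) ≠ g w' (n + (j:ℕ)) := by
      have h1 : ¬ (n + (j:ℕ) < n) := by omega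
      have h2 : (n + (j:ℕ)) - n < d := by omega
      simp only [hg, if_neg h1, dif_pos h2]
      have h3 : (⟨n + (j:ℕ) - n, h2⟩ : Fin d) = j := by
        apply Fin.ext; simp only [Fin.val_mk]; omega
      rw [h3]
      exact hj
    obtain ⟨N, hNle, hNagree, hNdiff⟩ := first_diff (n + j) hdiff
    have hsep := dist_ge_of_first_diff' hsc (g w) (g w') N hNagree hNdiff
    have hNm : N ≤ m - 1 := by
      have hj2 := j.2
      omega
    have hscle : sc (m-1) ≤ sc N := (hanti hsc).antitone hNm
    have hb2 := hbb2 (sc := sc) hsc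
    nlinarith [hpos hsc N]
  have hinj : Function.Injective (fun w : Fin d → Bool => cpt sc (g w)) := by
    intro w w' h
    by_contra hne
    have := key w w' hne
    simp only at h
    rw [h] at this
    simp only [sub_self, abs_zero] at this
    have hb2 := hbb2 (sc := sc) hsc
    nlinarith [hpos hsc (m-1)]
  set t : Finset ℝ := Finset.image (fun w => cpt sc (g w)) Finset.univ with ht
  have hcard : t.card = 2 ^ d := by
    rw [ht, Finset.card_image_of_injective _ hinj]
    simp
  have hsub : ↑t ⊆ (closedBall (cpt sc ε) R ∩ ESet sc) := by
    intro x hx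
    rw [ht] at hx
    simp only [Finset.coe_image, Finset.coe_univ, Set.image_univ, Set.mem_range] at hx
    obtain ⟨w, rfl⟩ := hx
    constructor
    · rw [mem_closedBall, Real.dist_eq]
      have hgag : ∀ i, i < n → g w i = ε i := by
        intro i hi
        simp only [hg, if_pos hi]
      calc |cpt sc (g w) - cpt sc ε| ≤ sc n := dist_le_of_agree hsc (g w) ε n hgag
        _ ≤ R := hn
    · exact ⟨g w, rfl⟩
  have hsep : ∀ x ∈ t, ∀ y ∈ t, x ≠ y → 2 * r < dist x y := by
    intro x hx y hy hxy
    rw [ht] at hx hy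
    simp only [Finset.mem_image, Finset.mem_univ, true_and] at hx hy
    obtain ⟨w, rfl⟩ := hx
    obtain ⟨w', rfl⟩ := hy
    have hww : w ≠ w' := fun h => hxy (by rw [h])
    rw [Real.dist_eq]
    exact lt_of_lt_of_le hr (key w w' hww)
  have := card_le_coverNumber r (closedBall (cpt sc ε) R ∩ ESet sc) t hsub hsep
  rw [hcard] at this
  refine le_trans (le_of_eq ?_) this
  push_cast
  ring


end basic
end

-- ==== Part 6 : dictionary between scales and levels ====

section dict
variable {α β : ℝ}

lemma sc_ratio_succ (hα : 0 < α) (hαβ : α < β) (m : ℕ) :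
    sc α β (m+1) ≤ bconst β * sc α β m := by
  rw [sc_succ, mul_comm]
  apply mul_le_mul_of_nonneg_right _ (le_of_lt (sc_pos m))
  rw [bconst]
  exact Real.exp_le_exp.mpr (by have := Lb_le_lev hα hαβ m; linarith)

lemma nice_sc (hα : 0 < α) (hαβ : α < β) (hβ : β < 1) : Nice (sc α β) (bconst β) :=
  ⟨sc_pos, sc_anti hα hαβ, sc_zero, sc_tendsto hα hαβ hβ,
    (bconst_pos (β := β)).le, bconst_lt_half hα hαβ hβ, sc_ratio_succ hα hαβ⟩

/-- first level whose scale is below R -/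
noncomputable def lvl (α β : ℝ) (R : ℝ) : ℕ :=
  if h : ∃ m, sc α β m < R then Nat.find h else 0

lemma lvl_spec (hα : 0 < α) (hαβ : α < β) (hβ : β < 1) {R : ℝ} (hR : 0 < R) :
    sc α β (lvl α β R) < R := by
  have h : ∃ m, sc α β m < R := exists_sc_lt hα hαβ hβ R hR
  rw [lvl, dif_pos h]
  exact Nat.find_spec h

lemma lvl_min {α β : ℝ} {R : ℝ} {k : ℕ} (hk : k < lvl α β R) : R ≤ sc α β k := by
  rw [lvl] at hk
  by_cases h : ∃ m, sc α β m < R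
  · rw [dif_pos h] at hk
    exact le_of_not_gt (Nat.find_min h hk)
  · rw [dif_neg h] at hk
    omega

lemma lvl_gt (hα : 0 < α) (hαβ : α < β) (hβ : β < 1) {R : ℝ} {N : ℕ} (hR : 0 < R)
    (hN : R ≤ sc α β N) : N < lvl α β R := by
  by_contra hc
  push_neg at hc
  have h : ∃ m, sc α β m < R := exists_sc_lt hα hαβ hβ R hR
  rw [lvl, dif_pos h] at hc
  have h1 := Nat.find_spec h
  have h2 : sc α β N ≤ sc α β (Nat.find h) := (sc_anti hα hαβ).antitone hc
  linarith

lemma lvl_le_lvl (hα : 0 < α) (hαβ : α < β) (hβ : β < 1) {r R : ℝ} (hr : 0 < r)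
    (hrR : r ≤ R) : lvl α β R ≤ lvl α β r := by
  have hR : 0 < R := lt_of_lt_of_le hr hrR
  have h1 : ∃ m, sc α β m < r := exists_sc_lt hα hαβ hβ r hr
  have h2 : ∃ m, sc α β m < R := exists_sc_lt hα hαβ hβ R hR
  rw [lvl, lvl, dif_pos h1, dif_pos h2]
  exact Nat.find_mono (fun n hn => lt_of_lt_of_le hn hrR)

lemma kap_ex (n : ℕ) : ∃ k, n ≤ endblk k :=
  ⟨n, by have := nblk_self_le n; unfold endblk; omega⟩

/-- index of the first block whose end is at or after level n -/
noncomputable def kap (n : ℕ) : ℕ := Nat.find (kap_ex n)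

lemma kap_spec (n : ℕ) : n ≤ endblk (kap n) := Nat.find_spec (kap_ex n)

lemma kap_min {n k : ℕ} (hk : k < kap n) : endblk k < n := by
  have := Nat.find_min (kap_ex n) hk
  omega

/-- index of first block with sc(endblk k) < R -/
noncomputable def kapR (α β : ℝ) (R : ℝ) : ℕ :=
  if h : ∃ k, sc α β (endblk k) < R then Nat.find h else 0

lemma exists_kapR (hα : 0 < α) (hαβ : α < β) (hβ : β < 1) {R : ℝ} (hR : 0 < R) :
    ∃ k, sc α β (endblk k) < R := by
  obtain ⟨m, hm⟩ := exists_sc_lt hα hαβ hβ R hR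
  refine ⟨m, lt_of_le_of_lt ?_ hm⟩
  apply (sc_anti hα hαβ).antitone
  calc m ≤ nblk m := nblk_self_le m
    _ ≤ endblk m := by unfold endblk; omega

lemma kapR_spec (hα : 0 < α) (hαβ : α < β) (hβ : β < 1) {R : ℝ} (hR : 0 < R) :
    sc α β (endblk (kapR α β R)) < R := by
  have h := exists_kapR hα hαβ hβ hR
  rw [kapR, dif_pos h]
  exact Nat.find_spec h

lemma kapR_min {α β R : ℝ} {k : ℕ} (hk : k < kapR α β R) : R ≤ sc α β (endblk k) := by
  rw [kapR] at hk
  by_cases h : ∃ j, sc α β (endblk j) < R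
  · rw [dif_pos h] at hk
    exact le_of_not_gt (Nat.find_min h hk)
  · rw [dif_neg h] at hk
    omega

/-- the key identity : kapR R = kap (lvl R) when 0 < R ≤ 1, lvl ≥ 1 -/
lemma kapR_eq_kap (hα : 0 < α) (hαβ : α < β) (hβ : β < 1) {R : ℝ} (hR : 0 < R)
    (hlvl : 1 ≤ lvl α β R) : kapR α β R = kap (lvl α β R) := by
  apply le_antisymm
  · -- kapR ≤ kap lvl : since sc (endblk (kap lvl)) < R
    have h := exists_kapR hα hαβ hβ (R := R) hR
    rw [kapR, dif_pos h]
    apply Nat.find_min' h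
    -- sc (endblk (kap (lvl R))) < R : endblk (kap lvl) ≥ lvl so sc ≤ sc lvl < R
    calc sc α β (endblk (kap (lvl α β R))) ≤ sc α β (lvl α β R) :=
          (sc_anti hα hαβ).antitone (kap_spec _)
      _ < R := lvl_spec hα hαβ hβ hR
  · -- kap lvl ≤ kapR : since lvl ≤ endblk (kapR)
    rw [kap]
    apply Nat.find_min' (kap_ex _)
    -- goal : lvl R ≤ endblk (kapR R)
    have h1 : sc α β (endblk (kapR α β R)) < R := kapR_spec hα hαβ hβ hR
    by_contra hc
    push_neg at hc
    have h2 : endblk (kapR α β R) < lvl α β R := hc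
    have := lvl_min h2
    linarith

end dict

-- ==== Part 7 : window counting combinatorics ====

section comb
variable {α β : ℝ}

noncomputable def Bc (n m : ℕ) : ℕ := ((Finset.Ico n m).filter (fun i => InBlock i)).card
noncomputable def Ac (n m : ℕ) : ℕ := ((Finset.Ico n m).filter (fun i => ¬ InBlock i)).card

lemma Ac_add_Bc (n m : ℕ) (h : n ≤ m) : Ac n m + Bc n m = m - n := by
  rw [Ac, Bc, add_comm]
  have h1 := Finset.card_filter_add_card_filter_not
    (s := Finset.Ico n m) (p := fun i => InBlock i)
  rw [Nat.card_Ico] at h1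
  omega

lemma Tl_window (hα : 0 < α) (hαβ : α < β) (n m : ℕ) (h : n ≤ m) :
    Tl α β m - Tl α β n = (Ac n m) * La α + (Bc n m) * Lb β := by
  rw [Tl_diff _ _ h]
  rw [← Finset.sum_filter_add_sum_filter_not (Finset.Ico n m) (fun i => InBlock i)]
  have e1 : ∑ i ∈ (Finset.Ico n m).filter (fun i => InBlock i), lev α β i
      = (Bc n m) * Lb β := by
    rw [Bc, ← nsmul_eq_mul, ← Finset.sum_const]
    apply Finset.sum_congr rfl
    intro i hi
    simp only [Finset.mem_filter] at hi
    simp [lev, hi.2]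
  have e2 : ∑ i ∈ (Finset.Ico n m).filter (fun i => ¬ InBlock i), lev α β i
      = (Ac n m) * La α := by
    rw [Ac, ← nsmul_eq_mul, ← Finset.sum_const]
    apply Finset.sum_congr rfl
    intro i hi
    simp only [Finset.mem_filter] at hi
    simp [lev, hi.2]
  rw [e1, e2]
  ring

lemma sq_le_two_pow (m : ℕ) (h : 4 ≤ m) : m^2 ≤ 2^m := by
  induction m with
  | zero => omega
  | succ n ih =>
    rcases Nat.lt_or_ge n 4 with h' | h'
    · have : n = 3 := by omega
      subst this; norm_num
    · have h1 := ih h'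
      have h2 : (n+1)^2 ≤ 2*n^2 := by nlinarith
      calc (n+1)^2 ≤ 2*n^2 := h2
        _ ≤ 2*2^n := by omega
        _ = 2^(n+1) := by ring

lemma pow4_le (k : ℕ) : (k+2)^4 ≤ 2^(k+16) := by
  set m := (k+16)/4 with hm
  have hm4 : 4*m ≤ k+16 ∧ k+13 ≤ 4*m := by
    constructor <;> omega
  have hmge : 4 ≤ m := by omega
  have h1 : m^2 ≤ 2^m := sq_le_two_pow m hmge
  have h2 : k+2 ≤ m^2 := by nlinarith [hm4.2]
  have h3 : k+2 ≤ 2^m := le_trans h2 h1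
  calc (k+2)^4 ≤ (2^m)^4 := Nat.pow_le_pow_left h3 4
    _ = 2^(4*m) := by rw [← Nat.pow_mul, Nat.mul_comm]
    _ ≤ 2^(k+16) := Nat.pow_le_pow_right (by norm_num) hm4.1

lemma nblk_quartic (k : ℕ) : (k+1)^4 ≤ nblk k := by
  induction k with
  | zero => norm_num [nblk]
  | succ n ih =>
    have h1 : (n+2)^4 ≤ 2^(n+16) := pow4_le n
    have h2 : n + 16 ≤ nblk n := nblk_ge n
    calc (n+1+1)^4 = (n+2)^4 := by ring_nf
      _ ≤ 2^(n+16) := h1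
      _ ≤ 2^(nblk n) := Nat.pow_le_pow_right (by norm_num) h2
      _ = nblk (n+1) := rfl

lemma Bc_le_global (n m K : ℕ) (hK : ∀ j, nblk j < m → j ≤ K) : Bc n m ≤ (K+2)^2 := by
  have hsub : (Finset.Ico n m).filter (fun i => InBlock i) ⊆
      (Finset.range (K+1)).biUnion (fun j => Finset.Ico (nblk j) (endblk j)) := by
    intro i hi
    simp only [Finset.mem_filter, Finset.mem_Ico] at hi
    obtain ⟨⟨hn, hm'⟩, j, hj1, hj2⟩ := hi
    have hjK : j ≤ K := hK j (lt_of_le_of_lt hj1 hm')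
    simp only [Finset.mem_biUnion, Finset.mem_range, Finset.mem_Ico]
    exact ⟨j, by omega, hj1, hj2⟩
  calc Bc n m ≤ ((Finset.range (K+1)).biUnion
        (fun j => Finset.Ico (nblk j) (endblk j))).card := Finset.card_le_card hsub
    _ ≤ ∑ j ∈ Finset.range (K+1), (Finset.Ico (nblk j) (endblk j)).card :=
        Finset.card_biUnion_le
    _ ≤ ∑ _j ∈ Finset.range (K+1), (K+1) := Finset.sum_le_sum (fun j hj => by
        rw [Nat.card_Ico]
        unfold endblk
        simp only [Finset.mem_range] at hj
        omega)
    _ = (K+1)*(K+1) := by rw [Finset.sum_const, Finset.card_range, smul_eq_mul]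
    _ ≤ (K+2)^2 := by nlinarith

lemma Bc_le_single (n m : ℕ) (hm : m ≤ nblk (kap (n+1) + 1)) : Bc n m ≤ kap (n+1) + 1 := by
  set κ := kap (n+1) with hκ
  have hsub : (Finset.Ico n m).filter (fun i => InBlock i) ⊆
      Finset.Ico (nblk κ) (endblk κ) := by
    intro i hi
    simp only [Finset.mem_filter, Finset.mem_Ico] at hi
    obtain ⟨⟨hn, hm'⟩, j, hj1, hj2⟩ := hi
    have hjκ : j ≤ κ := by
      by_contra hc
      push_neg at hc
      have : nblk (κ+1) ≤ nblk j := nblk_strictMono.monotone hc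
      omega
    have hjκ' : κ ≤ j := by
      by_contra hc
      push_neg at hc
      have := kap_min (n := n+1) (k := j) hc
      omega
    have : j = κ := le_antisymm hjκ hjκ'
    subst this
    simp only [Finset.mem_Ico]
    omega
  calc Bc n m ≤ (Finset.Ico (nblk κ) (endblk κ)).card := Finset.card_le_card hsub
    _ = κ + 1 := by rw [Nat.card_Ico]; unfold endblk; omega

/-- Case 2 of both combinatorial lemmas : the window spans at least two block regions. -/
lemma comb_case2 (n m : ℕ) (hnm : n ≤ m) (ρ' : ℝ) (hρ' : 0 ≤ ρ')
    (hcase : nblk (kap (n+1) + 1) < m) :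
    ρ' * Bc n m ≤ Ac n m + ρ' * (ρ' + 1)^2 := by
  set κ := kap (n+1) with hκ
  set K := Nat.findGreatest (fun k => nblk k < m) m with hK
  have hκm : κ + 1 ≤ m := by
    have h1 : κ + 1 ≤ nblk (κ+1) := nblk_self_le (κ+1)
    omega
  have hKge : κ + 1 ≤ K := Nat.le_findGreatest (P := fun k => nblk k < m) hκm hcase
  have hKpos : 1 ≤ K := by omega
  have hKspec : nblk K < m := by
    exact Nat.findGreatest_spec (P := fun k => nblk k < m) hκm hcase
  have hKbd : ∀ j, nblk j < m → j ≤ K := by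
    intro j hj
    by_contra hc
    push_neg at hc
    rcases le_or_gt j m with hjm | hjm
    · exact (Nat.findGreatest_is_greatest (P := fun k => nblk k < m) hc hjm) hj
    · have := nblk_self_le j
      omega
  have hB : Bc n m ≤ (K+2)^2 := Bc_le_global n m K hKbd
  have hgrow : endblk (K-1) + (K+2)^3 ≤ nblk K := by
    have := growth (K-1)
    have hKr : K - 1 + 1 = K := by omega
    rw [hKr] at this
    have hKr2 : K - 1 + 3 = K + 2 := by omega
    rw [hKr2] at this
    exact this
  have hκK : endblk κ ≤ endblk (K-1) := endblk_mono (by omega)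
  have hn' : n + 1 ≤ endblk κ := kap_spec (n+1)
  have hmn : (K+2)^3 + 1 ≤ m - n := by omega
  have hAc : Ac n m + Bc n m = m - n := Ac_add_Bc n m hnm
  rcases le_or_gt (ρ' + 1) ((K:ℝ) + 2) with hle | hlt
  · have hAcge : ((K:ℝ)+2)^3 + 1 - ((K:ℝ)+2)^2 ≤ Ac n m := by
      have h1 : ((K+2)^3 + 1 : ℕ) ≤ Ac n m + Bc n m := by omega
      have h2 : (Bc n m : ℝ) ≤ ((K:ℝ)+2)^2 := by exact_mod_cast hB
      have h3 : (((K+2)^3 + 1 : ℕ) : ℝ) ≤ (Ac n m : ℝ) + (Bc n m : ℝ) := by exact_mod_cast h1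
      push_cast at h3
      linarith
    have hBr : (Bc n m : ℝ) ≤ ((K:ℝ)+2)^2 := by exact_mod_cast hB
    have hKpos' : (0:ℝ) ≤ (K:ℝ) + 2 := by positivity
    nlinarith [sq_nonneg ((K:ℝ)+2), hρ']
  · have hBr : (Bc n m : ℝ) ≤ ((K:ℝ)+2)^2 := by exact_mod_cast hB
    have h2 : ((K:ℝ)+2)^2 ≤ (ρ'+1)^2 := by nlinarith [hlt]
    have h3 : (0:ℝ) ≤ Ac n m := by positivity
    nlinarith

noncomputable def Lam (α β : ℝ) (Ak : ℕ → ℕ) (k : ℕ) : ℝ :=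
  (Ak k) * La α + (k+1) * Lb β

lemma Lam_nonneg (hα : 0 < α) (hαβ : α < β) (Ak : ℕ → ℕ) (k : ℕ) :
    0 ≤ Lam α β Ak k := by
  have := La_pos (α := α) hα
  have := Lb_pos (α := α) (β := β) hα hαβ
  rw [Lam]
  positivity

lemma Lam_mono (hα : 0 < α) (hαβ : α < β) {Ak : ℕ → ℕ} (hAk : Monotone Ak) :
    Monotone (Lam α β Ak) := by
  intro i j hij
  rw [Lam, Lam]
  have h1 : (Ak i : ℝ) ≤ Ak j := by exact_mod_cast hAk hij
  have h2 : ((i:ℝ)+1) ≤ (j:ℝ)+1 := by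
    have : (i:ℝ) ≤ j := by exact_mod_cast hij
    linarith
  have := La_pos (α := α) hα
  have := Lb_pos (α := α) (β := β) hα hαβ
  nlinarith

/-- KEY combinatorial lemma for the block-adapted dimension functions -/
lemma comb_main (hα : 0 < α) (hαβ : α < β) (Ak : ℕ → ℕ) (ρ' C₀ : ℝ)
    (hρ' : 0 ≤ ρ') (hC₀0 : 0 ≤ C₀) (hC₀ : ∀ k, ρ' * (k+1) ≤ Ak k + C₀) :
    ∃ C, 0 ≤ C ∧ ∀ n m, n ≤ m → Lam α β Ak (kap (n+1)) ≤ Tl α β m - Tl α β n →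
      ρ' * Bc n m ≤ Ac n m + C := by
  refine ⟨C₀ + ρ' * (ρ' + 1)^2, by positivity, ?_⟩
  intro n m hnm hT
  set κ := kap (n+1) with hκ
  by_cases hcase : m ≤ nblk (κ + 1)
  · have hB : Bc n m ≤ κ + 1 := Bc_le_single n m hcase
    have hwin := Tl_window hα hαβ n m hnm
    have hLa := La_pos (α := α) hα
    have hLb := Lb_pos (α := α) (β := β) hα hαβ
    have hA : (Ak κ : ℝ) ≤ Ac n m := by
      rw [Lam] at hT
      rw [hwin] at hT
      have hBr : (Bc n m : ℝ) ≤ (κ:ℝ) + 1 := by exact_mod_cast hB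
      have h1 : ((κ:ℝ)+1) * Lb β - (Bc n m) * Lb β ≥ 0 := by nlinarith
      nlinarith
    have hBr : (Bc n m : ℝ) ≤ (κ:ℝ) + 1 := by exact_mod_cast hB
    calc ρ' * Bc n m ≤ ρ' * ((κ:ℝ)+1) := by nlinarith
      _ ≤ Ak κ + C₀ := hC₀ κ
      _ ≤ Ac n m + (C₀ + ρ' * (ρ'+1)^2) := by nlinarith
  · push_neg at hcase
    have := comb_case2 n m hnm ρ' hρ' hcase
    linarith

/-- KEY combinatorial lemma for the constant dimension functions (Assouad spectrum) -/
lemma comb_const (hα : 0 < α) (hαβ : α < β) (δ ρ' : ℝ) (hδ : 0 < δ) (hρ' : 0 ≤ ρ') :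
    ∃ C, 0 ≤ C ∧ ∀ n m, n ≤ m → δ * Tl α β n ≤ Tl α β m - Tl α β n →
      ρ' * Bc n m ≤ Ac n m + C := by
  have hLa := La_pos (α := α) hα
  have hLb := Lb_pos (α := α) (β := β) hα hαβ
  set δ' := δ * Lb β / La α with hδ'
  have hδ'0 : 0 < δ' := by positivity
  set k₂ : ℕ := Nat.ceil (2*(ρ'+1)/δ') + 1 with hk₂
  refine ⟨ρ' * ((k₂:ℝ) + 2) + ρ' * (ρ' + 1)^2, by positivity, ?_⟩
  intro n m hnm hT
  set κ := kap (n+1) with hκ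
  by_cases hcase : m ≤ nblk (κ + 1)
  · have hB : Bc n m ≤ κ + 1 := Bc_le_single n m hcase
    have hBr : (Bc n m : ℝ) ≤ (κ:ℝ) + 1 := by exact_mod_cast hB
    rcases le_or_gt κ k₂ with hκk | hκk
    · have : (κ:ℝ) + 1 ≤ (k₂:ℝ) + 2 := by
        have : (κ:ℝ) ≤ k₂ := by exact_mod_cast hκk
        linarith
      have h3 : (0:ℝ) ≤ Ac n m := by positivity
      nlinarith
    · -- κ > k₂ ≥ 1 : long window
      have hκ1 : 1 ≤ κ := by omega
      have hnlow : endblk (κ - 1) ≤ n := by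
        have := kap_min (n := n+1) (k := κ-1) (by omega)
        omega
      have hnq : (κ:ℕ)^4 ≤ n := by
        have h1 := nblk_quartic (κ-1)
        have h2 : κ - 1 + 1 = κ := by omega
        rw [h2] at h1
        have h3 : nblk (κ-1) ≤ endblk (κ-1) := by unfold endblk; omega
        omega
      -- window length bound
      have hlen : δ' * n ≤ ((m - n : ℕ) : ℝ) := by
        have h1 : Tl α β m - Tl α β n ≤ ((m - n : ℕ):ℝ) * La α := Tl_diff_le hα hαβ n m hnm
        have h2 : ((n:ℝ)) * Lb β ≤ Tl α β n := Tl_ge hα hαβ n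
        have h3 : δ * ((n:ℝ) * Lb β) ≤ δ * Tl α β n := by nlinarith
        rw [hδ']
        rw [div_mul_eq_mul_div, div_le_iff₀ hLa]
        nlinarith
      have hAc : Ac n m + Bc n m = m - n := Ac_add_Bc n m hnm
      -- δ' κ^4 ≥ (ρ'+1)(κ+1) since κ ≥ k₂
      have hκr : 2*(ρ'+1)/δ' ≤ (κ:ℝ) := by
        have h1 : (k₂:ℝ) ≤ κ := by exact_mod_cast hκk.le
        have h2 : 2*(ρ'+1)/δ' ≤ (k₂:ℝ) := by
          rw [hk₂]
          push_cast
          have := Nat.le_ceil (2*(ρ'+1)/δ')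
          linarith
        linarith
      have hbig : (ρ'+1) * ((κ:ℝ)+1) ≤ δ' * (κ:ℝ)^4 := by
        have hκ0 : (1:ℝ) ≤ (κ:ℝ) := by exact_mod_cast hκ1
        have h1 : 2*(ρ'+1) ≤ δ' * κ := by
          rw [div_le_iff₀ hδ'0] at hκr
          linarith [hκr]
        have hκsq : (κ:ℝ) * ((κ:ℝ)+1) ≤ 2*(κ:ℝ)^4 := by nlinarith [sq_nonneg ((κ:ℝ)-1), sq_nonneg ((κ:ℝ)+1), sq_nonneg ((κ:ℝ)^2-1), sq_nonneg (κ:ℝ)]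
        have h2 := mul_le_mul_of_nonneg_right h1 (show (0:ℝ) ≤ (κ:ℝ)+1 by linarith)
        have h3 := mul_le_mul_of_nonneg_left hκsq hδ'0.le
        nlinarith
      have hnr : ((κ:ℝ))^4 ≤ (n:ℝ) := by exact_mod_cast hnq
      have hAcge : δ' * (κ:ℝ)^4 - ((κ:ℝ)+1) ≤ Ac n m := by
        have h1 : (Ac n m : ℝ) + Bc n m = ((m-n : ℕ):ℝ) := by exact_mod_cast hAc
        nlinarith
      nlinarith
  · push_neg at hcase
    have := comb_case2 n m hnm ρ' hρ' hcase
    have h3 : (0:ℝ) ≤ ρ' * ((k₂:ℝ)+2) := by positivity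
    linarith

end comb

-- ==== Part 8 : dimension functions ====

section phi
variable {α β : ℝ}

noncomputable def Phi (α β : ℝ) (Ak : ℕ → ℕ) (R : ℝ) : ℝ :=
  if 0 < R ∧ R < 1 then Lam α β Ak (kapR α β R) / (-Real.log R) else 0

lemma neg_log_pos {R : ℝ} (h0 : 0 < R) (h1 : R < 1) : 0 < -Real.log R := by
  have := Real.log_neg h0 h1; linarith

lemma Phi_nonneg (hα : 0 < α) (hαβ : α < β) (Ak : ℕ → ℕ) :
    ∀ x ∈ Ioo (0:ℝ) 1, 0 ≤ Phi α β Ak x := by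
  intro x hx
  rw [Phi, if_pos ⟨hx.1, hx.2⟩]
  exact div_nonneg (Lam_nonneg hα hαβ Ak _) (neg_log_pos hx.1 hx.2).le

lemma Phi_rpow (Ak : ℕ → ℕ) {R : ℝ} (h0 : 0 < R) (h1 : R < 1) :
    R ^ (1 + Phi α β Ak R) = Real.exp (Real.log R - Lam α β Ak (kapR α β R)) := by
  rw [Real.rpow_def_of_pos h0, Phi, if_pos ⟨h0, h1⟩]
  congr 1
  have hne : -Real.log R ≠ 0 := ne_of_gt (neg_log_pos h0 h1)
  field_simp
  rw [mul_comm, add_mul, neg_mul, div_mul_cancel₀ _ (fun h => hne (by rw [h, neg_zero])), one_mul, ← sub_eq_add_neg]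

lemma kapR_anti (hα : 0 < α) (hαβ : α < β) (hβ : β < 1) {x y : ℝ} (hx : 0 < x)
    (hxy : x ≤ y) : kapR α β y ≤ kapR α β x := by
  have hex : ∃ k, sc α β (endblk k) < x := exists_kapR hα hαβ hβ hx
  have hey : ∃ k, sc α β (endblk k) < y := exists_kapR hα hαβ hβ (lt_of_lt_of_le hx hxy)
  rw [kapR, kapR, dif_pos hex, dif_pos hey]
  exact Nat.find_mono (fun n hn => lt_of_lt_of_le hn hxy)

lemma Phi_mono (hα : 0 < α) (hαβ : α < β) (hβ : β < 1) {Ak : ℕ → ℕ} (hAk : Monotone Ak) :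
    ∀ x ∈ Ioo (0:ℝ) 1, ∀ y ∈ Ioo (0:ℝ) 1, x ≤ y →
      x ^ (1 + Phi α β Ak x) ≤ y ^ (1 + Phi α β Ak y) := by
  intro x hx y hy hxy
  rw [Phi_rpow Ak hx.1 hx.2, Phi_rpow Ak hy.1 hy.2, Real.exp_le_exp]
  have h1 : Real.log x ≤ Real.log y := Real.log_le_log hx.1 hxy
  have h2 : Lam α β Ak (kapR α β y) ≤ Lam α β Ak (kapR α β x) :=
    Lam_mono hα hαβ hAk (kapR_anti hα hαβ hβ hx.1 hxy)
  linarith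

lemma Phi_tendsto_rpow (hα : 0 < α) (hαβ : α < β) (Ak : ℕ → ℕ) :
    Tendsto (fun x : ℝ => x ^ (1 + Phi α β Ak x)) (nhdsWithin 0 (Ioo 0 1)) (nhds 0) := by
  apply squeeze_zero' (eventually_nhdsWithin_of_forall ?_) (eventually_nhdsWithin_of_forall ?_)
    (tendsto_id.mono_left nhdsWithin_le_nhds)
  · intro x hx
    exact Real.rpow_nonneg hx.1.le _
  · intro x hx
    rw [Phi_rpow Ak hx.1 hx.2]
    calc Real.exp (Real.log x - Lam α β Ak (kapR α β x)) ≤ Real.exp (Real.log x) := by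
          rw [Real.exp_le_exp]
          have := Lam_nonneg hα hαβ Ak (kapR α β x)
          linarith
      _ = x := Real.exp_log hx.1

lemma isDimFun_Phi (hα : 0 < α) (hαβ : α < β) (hβ : β < 1) {Ak : ℕ → ℕ}
    (hAk : Monotone Ak) : IsDimensionFunction (Phi α β Ak) :=
  ⟨Phi_nonneg hα hαβ Ak, Phi_mono hα hαβ hβ hAk, Phi_tendsto_rpow hα hαβ Ak⟩

lemma Phi_tendsto_zero (hα : 0 < α) (hαβ : α < β) (hβ : β < 1) {Ak : ℕ → ℕ}
    (hAk2 : ∀ k, Ak k ≤ (k+1)^2) :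
    Tendsto (Phi α β Ak) (nhdsWithin 0 (Ioo 0 1)) (nhds 0) := by
  have hLa := La_pos (α := α) hα
  have hLb := Lb_pos (α := α) (β := β) hα hαβ
  rw [Metric.tendsto_nhdsWithin_nhds]
  intro ε hε
  set K : ℕ := Nat.ceil (8 * La α / (Lb β * ε)) + 1 with hK
  refine ⟨sc α β (endblk K), sc_pos _, ?_⟩
  intro x hx hdist
  have hx0 := hx.1
  have hx1 := hx.2
  rw [Real.dist_eq, sub_zero, abs_of_pos hx0] at hdist
  -- kapR x > K
  set κ := kapR α β x with hκdef
  have hκK : K < κ := by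
    by_contra hc
    push_neg at hc
    have h1 : sc α β (endblk κ) < x := kapR_spec hα hαβ hβ hx0
    have h2 : sc α β (endblk K) ≤ sc α β (endblk κ) :=
      (sc_anti hα hαβ).antitone (endblk_mono hc)
    linarith
  have hκ1 : 1 ≤ κ := by omega
  -- -log x ≥ Tl (endblk (κ-1)) ≥ κ^4 * Lb
  have hlow : x ≤ sc α β (endblk (κ-1)) := kapR_min (by omega)
  have hlog : (κ:ℝ)^4 * Lb β ≤ -Real.log x := by
    have h1 : Real.log x ≤ Real.log (sc α β (endblk (κ-1))) := Real.log_le_log hx0 hlow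
    have h2 : Real.log (sc α β (endblk (κ-1))) = -(Tl α β (endblk (κ-1))) := by
      rw [sc, Real.log_exp]
    have h3 : ((endblk (κ-1) : ℕ):ℝ) * Lb β ≤ Tl α β (endblk (κ-1)) := Tl_ge hα hαβ _
    have h4 : (κ:ℕ)^4 ≤ endblk (κ-1) := by
      have := nblk_quartic (κ-1)
      have h5 : κ - 1 + 1 = κ := by omega
      rw [h5] at this
      unfold endblk
      omega
    have h4' : ((κ:ℝ))^4 ≤ ((endblk (κ-1) : ℕ):ℝ) := by exact_mod_cast h4
    nlinarith
  have hκpos : (0:ℝ) < (κ:ℝ) := by exact_mod_cast hκ1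
  have hκge1 : (1:ℝ) ≤ (κ:ℝ) := by exact_mod_cast hκ1
  -- Lam κ ≤ 8 κ^2 La
  have hLam : Lam α β Ak κ ≤ 8 * (κ:ℝ)^2 * La α := by
    rw [Lam]
    have h1 : (Ak κ : ℝ) ≤ ((κ:ℝ)+1)^2 := by exact_mod_cast hAk2 κ
    have h2 : ((κ:ℝ)+1) ≤ 2*(κ:ℝ) := by linarith
    have h3 : Lb β < La α := Lb_lt_La hα hαβ
    have h4 : ((κ:ℝ)+1)^2 ≤ 4*(κ:ℝ)^2 := by nlinarith
    have e1 : (Ak κ:ℝ)*La α ≤ ((κ:ℝ)+1)^2*La α := mul_le_mul_of_nonneg_right h1 hLa.le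
    have e2 : ((κ:ℝ)+1)^2*La α ≤ 4*(κ:ℝ)^2*La α := mul_le_mul_of_nonneg_right h4 hLa.le
    have e3 : ((κ:ℝ)+1)*Lb β ≤ 2*(κ:ℝ)*La α := by nlinarith
    have e4 : 2*(κ:ℝ)*La α ≤ 4*(κ:ℝ)^2*La α := by nlinarith
    linarith
  -- conclude
  have hlogpos := neg_log_pos hx0 hx1
  have hPhile : Phi α β Ak x ≤ 8 * La α / ((κ:ℝ)^2 * Lb β) := by
    rw [Phi, if_pos ⟨hx0, hx1⟩, ← hκdef]
    rw [div_le_div_iff₀ hlogpos (by positivity)]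
    have h5 : (κ:ℝ)^2 * ((κ:ℝ)^2 * Lb β) ≤ (κ:ℝ)^4 * Lb β := by nlinarith
    calc Lam α β Ak κ * ((κ:ℝ)^2 * Lb β) ≤ (8*(κ:ℝ)^2*La α) * ((κ:ℝ)^2 * Lb β) := by
          apply mul_le_mul_of_nonneg_right hLam (by positivity)
      _ = 8 * La α * ((κ:ℝ)^2 * ((κ:ℝ)^2 * Lb β)) := by ring
      _ ≤ 8 * La α * ((κ:ℝ)^4 * Lb β) := by
          have := mul_le_mul_of_nonneg_left h5 (by positivity : (0:ℝ) ≤ 8*La α)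
          linarith
      _ ≤ 8 * La α * (-Real.log x) := by
          have := mul_le_mul_of_nonneg_left hlog (by positivity : (0:ℝ) ≤ 8*La α)
          linarith
  have hfin : 8 * La α / ((κ:ℝ)^2 * Lb β) < ε := by
    rw [div_lt_iff₀ (by positivity)]
    have h1 : 8 * La α / (Lb β * ε) < (K:ℝ) := by
      rw [hK]
      push_cast
      have := Nat.le_ceil (8 * La α / (Lb β * ε))
      linarith
    have h2 : (K:ℝ) < (κ:ℝ) := by exact_mod_cast hκK
    have h3 : (κ:ℝ) ≤ (κ:ℝ)^2 := by nlinarith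
    rw [div_lt_iff₀ (by positivity)] at h1
    nlinarith
  have hPhinn : 0 ≤ Phi α β Ak x := Phi_nonneg hα hαβ Ak x hx
  rw [Real.dist_eq, sub_zero, abs_of_nonneg hPhinn]
  linarith

end phi

-- ==== Part 9 : membership and violation machinery ====

section master
variable {α β : ℝ}

def dimSet (Φ : ℝ → ℝ) (E : Set ℝ) : Set ℝ := {a : ℝ | ∃ c₁ > (0:ℝ), ∃ c₂ > (0:ℝ), ∀ r R : ℝ,
    0 < r → r ≤ R ^ (1 + Φ R) → R ^ (1 + Φ R) ≤ R → R < c₁ → ∀ z ∈ E,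
      coverNumber r (closedBall z R ∩ E) ≤ ENNReal.ofReal (c₂ * (R / r) ^ a)}

lemma upperPhiDim_eq (Φ : ℝ → ℝ) (E : Set ℝ) : upperPhiDim Φ E = sInf (dimSet Φ E) := rfl

lemma pow2_cast (k : ℕ) : ((2:ℝ≥0∞)^k) = ENNReal.ofReal ((2:ℝ)^k) := by
  rw [ENNReal.ofReal_pow (by norm_num : (0:ℝ) ≤ 2)]
  norm_num

lemma exp_nat_log2 (k : ℕ) : (2:ℝ)^k = Real.exp (k * Real.log 2) := by
  rw [mul_comm, Real.exp_mul, Real.exp_log (by norm_num : (0:ℝ) < 2)]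
  norm_num

lemma sc_lt_one (hα : 0 < α) (hαβ : α < β) {m : ℕ} (hm : 1 ≤ m) : sc α β m < 1 := by
  rw [sc, Real.exp_lt_one_iff]
  have h1 := Tl_ge hα hαβ m
  have h2 := Lb_pos (α := α) (β := β) hα hαβ
  have h3 : (1:ℝ) ≤ (m:ℝ) := by exact_mod_cast hm
  nlinarith

lemma exp_rpow' (X γ : ℝ) : (Real.exp X) ^ γ = Real.exp (X * γ) := by
  rw [Real.rpow_def_of_pos (Real.exp_pos X), Real.log_exp]

/-- MASTER membership lemma -/
lemma mem_master (hα : 0 < α) (hαβ : α < β) (hβ : β < 1) (Φ : ℝ → ℝ) (γ : ℝ) (hγ0 : 0 ≤ γ)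
    (d₀ : ℕ) (hd₀ : 2 * (bconst β)^d₀ ≤ 1 - 2*(bconst β)) (C : ℝ)
    (HW : ∀ R r : ℝ, 0 < r → r ≤ R ^ (1 + Φ R) → R ^ (1 + Φ R) ≤ R → 0 < R →
      R < sc α β (nblk 1 + d₀ + 3) →
      (((lvl α β r - lvl α β R : ℕ) : ℝ) + 1 + d₀) * Real.log 2
        ≤ γ * (Tl α β (lvl α β r - 1) - Tl α β (lvl α β R)) + C) :
    γ ∈ dimSet Φ (ESet (sc α β)) := by
  have hnice := nice_sc hα hαβ hβ
  refine ⟨sc α β (nblk 1 + d₀ + 3), sc_pos _, Real.exp C, Real.exp_pos C, ?_⟩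
  intro r R hr hrR hRR hRc z hz
  obtain ⟨ε, rfl⟩ := hz
  have hR0 : 0 < R := lt_of_lt_of_le hr (le_trans hrR hRR)
  have hrle : r ≤ R := le_trans hrR hRR
  set nn := lvl α β R with hnn
  set m := lvl α β r with hm
  have hnn_big : nblk 1 + d₀ + 3 < nn := lvl_gt hα hαβ hβ hR0 hRc.le
  have hnm : nn ≤ m := lvl_le_lvl hα hαβ hβ hr hrle
  have hnblk1 : 16 ≤ nblk 1 := by
    have := nblk_ge 1; omega
  set n' := nn - 1 - d₀ with hn'
  -- the covering bound
  have hRb : 2 * R ≤ (1 - 2*(bconst β)) * sc α β n' := by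
    have h1 : R ≤ sc α β (nn - 1) := lvl_min (by omega)
    have h2 : sc α β (nn-1) ≤ sc α β n' * (bconst β) ^ ((nn-1) - n') :=
      sc_ratio hα hαβ n' (nn-1) (by omega)
    have h3 : (nn - 1) - n' = d₀ := by omega
    rw [h3] at h2
    have h4 : 0 < sc α β n' := sc_pos n'
    have h5 : (0:ℝ) ≤ (bconst β)^d₀ := pow_nonneg (bconst_pos (β := β)).le d₀
    nlinarith
  have hcount := count_upper hnice ε R r n' m (by omega)
    (lvl_spec hα hαβ hβ hr).le hRb
  refine le_trans hcount ?_
  rw [pow2_cast]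
  apply ENNReal.ofReal_le_ofReal
  -- real inequality
  have hmn' : (m - n' : ℕ) = (m - nn) + 1 + d₀ := by omega
  have hm1 : 1 ≤ m := by omega
  have hRr : Real.exp (Tl α β (m-1) - Tl α β nn) ≤ R / r := by
    have h1 : sc α β nn < R := lvl_spec hα hαβ hβ hR0
    have h2 : r ≤ sc α β (m-1) := lvl_min (by omega)
    have h3 : Real.exp (Tl α β (m-1) - Tl α β nn) = sc α β nn / sc α β (m-1) := by
      rw [sc, sc, ← Real.exp_sub]
      ring_nf
    rw [h3]
    exact div_le_div₀ hR0.le h1.le hr h2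
  have h4 := HW R r hr hrR hRR hR0 hRc
  have h5 : Real.exp (γ * (Tl α β (m-1) - Tl α β nn)) ≤ (R/r)^γ := by
    rw [mul_comm γ, ← exp_rpow']
    exact Real.rpow_le_rpow (Real.exp_pos _).le hRr hγ0
  rw [exp_nat_log2]
  have h6 : ((m - n' : ℕ) : ℝ) = ((m - nn : ℕ):ℝ) + 1 + d₀ := by
    rw [hmn']
    push_cast
    ring
  calc Real.exp ((m - n' : ℕ) * Real.log 2)
      ≤ Real.exp (γ * (Tl α β (m-1) - Tl α β nn) + C) := by
        rw [Real.exp_le_exp, h6]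
        exact h4
    _ = Real.exp C * Real.exp (γ * (Tl α β (m-1) - Tl α β nn)) := by
        rw [← Real.exp_add]; ring_nf
    _ ≤ Real.exp C * (R/r)^γ := by
        apply mul_le_mul_of_nonneg_left h5 (Real.exp_pos C).le

end master

section memb
variable {α β : ℝ}

noncomputable def rhof (α β γ : ℝ) : ℝ := (1 - γ/β)/(γ/α - 1)

lemma rhof_nonneg (hα : 0 < α) (hαβ : α < β) (hβ : β < 1) {γ : ℝ} (hγα : α < γ)
    (hγβ : γ ≤ β) : 0 ≤ rhof α β γ := by
  have hβ0 : 0 < β := lt_trans hα hαβ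
  have h1 : 0 ≤ 1 - γ/β := by
    rw [sub_nonneg, div_le_one hβ0]
    exact hγβ
  have h2 : 0 < γ/α - 1 := by
    rw [sub_pos, lt_div_iff₀ hα]
    linarith
  exact div_nonneg h1 h2.le

lemma rhof_key (hα : 0 < α) {γ : ℝ} (hγα : α < γ) :
    rhof α β γ * (γ/α - 1) = 1 - γ/β := by
  have h2 : γ/α - 1 ≠ 0 := by
    have : 0 < γ/α - 1 := by
      rw [sub_pos, lt_div_iff₀ hα]
      linarith
    linarith
  have hne1 : γ - α ≠ 0 := by intro h; apply h2; field_simp; linarith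
  have hne2 : α ≠ 0 := ne_of_gt hα
  rw [rhof]
  field_simp

/-- derive the HW hypothesis from a window-combinatorics bound -/
lemma HW_of_comb (hα : 0 < α) (hαβ : α < β) (hβ : β < 1) (Φ : ℝ → ℝ) {γ : ℝ}
    (hγα : α < γ) (hγβ : γ ≤ β) (Ccb : ℝ) (hCcb : 0 ≤ Ccb) (d₀ : ℕ)
    (hwin : ∀ R r : ℝ, 0 < r → r ≤ R ^ (1 + Φ R) → R ^ (1 + Φ R) ≤ R → 0 < R →
      R < sc α β (nblk 1 + d₀ + 3) →
      rhof α β γ * Bc (lvl α β R - 1) (lvl α β r) ≤ Ac (lvl α β R - 1) (lvl α β r) + Ccb) :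
    ∀ R r : ℝ, 0 < r → r ≤ R ^ (1 + Φ R) → R ^ (1 + Φ R) ≤ R → 0 < R →
      R < sc α β (nblk 1 + d₀ + 3) →
      (((lvl α β r - lvl α β R : ℕ) : ℝ) + 1 + d₀) * Real.log 2
        ≤ γ * (Tl α β (lvl α β r - 1) - Tl α β (lvl α β R))
          + (((γ/α - 1) * Ccb + 2 + d₀) * Real.log 2 + 2 * γ * La α) := by
  intro R r hr hrR hRR hR0 hRc
  have hγ0 : 0 < γ := lt_trans hα hγα
  have hβ0 : 0 < β := lt_trans hα hαβ
  have hLa := La_pos (α := α) hα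
  have hLb := Lb_pos (α := α) (β := β) hα hαβ
  have hlog2 := log2_pos
  have hrle : r ≤ R := le_trans hrR hRR
  set nn := lvl α β R with hnn
  set m := lvl α β r with hm
  have hnblk1 : 16 ≤ nblk 1 := by have := nblk_ge 1; omega
  have hnn_big : nblk 1 + d₀ + 3 < nn := lvl_gt hα hαβ hβ hR0 hRc.le
  have hnm : nn ≤ m := lvl_le_lvl hα hαβ hβ hr hrle
  set n := nn - 1 with hn
  have hnm' : n ≤ m := by omega
  set A := Ac n m with hA
  set B := Bc n m with hB
  have hAB : A + B = m - n := Ac_add_Bc n m hnm'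
  have hwinval := hwin R r hr hrR hRR hR0 hRc
  have hTl : Tl α β m - Tl α β n = (A:ℝ) * La α + (B:ℝ) * Lb β := Tl_window hα hαβ n m hnm'
  -- core inequality
  have hρA : (1 - γ/β) * B ≤ (γ/α - 1) * ((A:ℝ) + Ccb) := by
    have h2 : 0 < γ/α - 1 := by
      rw [sub_pos, lt_div_iff₀ hα]; linarith
    have h3 := mul_le_mul_of_nonneg_left hwinval h2.le
    calc (1 - γ/β) * B = rhof α β γ * (γ/α - 1) * B := by rw [rhof_key hα hγα]
      _ = (γ/α - 1) * (rhof α β γ * B) := by ring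
      _ ≤ (γ/α - 1) * ((A:ℝ) + Ccb) := h3
  have hcore : ((A:ℝ) + B) ≤ γ/α * A + γ/β * B + (γ/α - 1) * Ccb := by nlinarith
  -- translate to the log scale
  have hLaK : La α = Real.log 2 / α := rfl
  have hLbK : Lb β = Real.log 2 / β := rfl
  have hγT : γ * ((A:ℝ) * La α + (B:ℝ) * Lb β) = (γ/α * A + γ/β * B) * Real.log 2 := by
    rw [hLaK, hLbK]
    field_simp
  -- edge T's
  have hm1 : 1 ≤ m := by omega
  have hTm : Tl α β m = Tl α β (m-1) + lev α β (m-1) := by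
    have := Tl_succ (α := α) (β := β) (m-1)
    rw [show m - 1 + 1 = m by omega] at this
    exact this
  have hTn : Tl α β nn = Tl α β n + lev α β n := by
    have := Tl_succ (α := α) (β := β) n
    rw [show n + 1 = nn by omega] at this
    exact this
  have hlev1 := lev_le_La hα hαβ (m-1)
  have hlev2 := lev_le_La hα hαβ n
  have hlev1' := lev_pos hα hαβ (m-1)
  have hlev2' := lev_pos hα hαβ n
  have hTedge : Tl α β (m-1) - Tl α β nn ≥ (Tl α β m - Tl α β n) - 2 * La α := by
    nlinarith
  -- cast count
  have hcast : ((m - nn : ℕ) : ℝ) + 1 = (A:ℝ) + B := by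
    have h1 : (m - nn) + 1 = m - n := by omega
    have h2 : ((m - n : ℕ):ℝ) = (A:ℝ) + B := by exact_mod_cast hAB.symm
    rw [← h2, ← h1]
    push_cast
    ring
  have hγTedge : γ * (Tl α β m - Tl α β n) - 2*γ*La α ≤ γ * (Tl α β (m-1) - Tl α β nn) := by
    nlinarith
  calc (((m - nn : ℕ) : ℝ) + 1 + d₀) * Real.log 2
      = ((A:ℝ) + B) * Real.log 2 + (d₀:ℝ) * Real.log 2 := by rw [hcast]; ring
    _ ≤ (γ/α * A + γ/β * B + (γ/α - 1) * Ccb) * Real.log 2 + (d₀:ℝ) * Real.log 2 := by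
        apply add_le_add_left
        apply mul_le_mul_of_nonneg_right hcore hlog2.le
    _ = γ * ((A:ℝ) * La α + (B:ℝ) * Lb β) + ((γ/α - 1) * Ccb + d₀) * Real.log 2 := by
        rw [hγT]; ring
    _ = γ * (Tl α β m - Tl α β n) + ((γ/α - 1) * Ccb + d₀) * Real.log 2 := by rw [hTl]
    _ ≤ γ * (Tl α β (m-1) - Tl α β nn) + ((γ/α - 1) * Ccb + d₀) * Real.log 2 + 2*γ*La α := by
        nlinarith
    _ ≤ γ * (Tl α β (m-1) - Tl α β nn)
          + (((γ/α - 1) * Ccb + 2 + d₀) * Real.log 2 + 2 * γ * La α) := by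
        nlinarith

end memb

section inst
variable {α β : ℝ}

/-- membership of all γ > β, for any Φ -/
lemma mem_triv (hα : 0 < α) (hαβ : α < β) (hβ : β < 1) (Φ : ℝ → ℝ) (d₀ : ℕ)
    (hd₀ : 2 * (bconst β)^d₀ ≤ 1 - 2*(bconst β)) (γ : ℝ) (hγβ : β < γ) :
    γ ∈ dimSet Φ (ESet (sc α β)) := by
  have hβ0 : 0 < β := lt_trans hα hαβ
  have hγ0 : 0 ≤ γ := by linarith
  have hLa := La_pos (α := α) hα
  have hLb := Lb_pos (α := α) (β := β) hα hαβ
  have hlog2 := log2_pos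
  apply mem_master hα hαβ hβ Φ γ hγ0 d₀ hd₀ ((2 + (d₀:ℝ))*Real.log 2 + γ*La α)
  intro R r hr hrR hRR hR0 hRc
  have hrle : r ≤ R := le_trans hrR hRR
  set nn := lvl α β R with hnn
  set m := lvl α β r with hm
  have hnblk1 : 16 ≤ nblk 1 := by have := nblk_ge 1; omega
  have hnn_big : nblk 1 + d₀ + 3 < nn := lvl_gt hα hαβ hβ hR0 hRc.le
  have hnm : nn ≤ m := lvl_le_lvl hα hαβ hβ hr hrle
  have hγLb : Real.log 2 ≤ γ * Lb β := by
    have h1 : Lb β = Real.log 2 / β := rfl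
    have h2 : (1:ℝ) < γ/β := (one_lt_div hβ0).mpr hγβ
    have h3 : γ * Lb β = (γ/β) * Real.log 2 := by rw [h1]; field_simp
    nlinarith
  rcases Nat.eq_or_lt_of_le hnm with heq | hlt
  · -- m = nn
    rw [← heq]
    simp only [Nat.sub_self, Nat.cast_zero]
    have hTm : Tl α β nn = Tl α β (nn-1) + lev α β (nn-1) := by
      have := Tl_succ (α := α) (β := β) (nn-1)
      rw [show nn - 1 + 1 = nn by omega] at this
      exact this
    have h2 := lev_le_La hα hαβ (nn-1)
    have h3 := lev_pos hα hαβ (nn-1)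
    have h4 : γ * (Tl α β (nn-1) - Tl α β nn) ≥ -(γ * La α) := by nlinarith
    nlinarith
  · -- nn < m
    have hTd : ((m - 1 - nn : ℕ):ℝ) * Lb β ≤ Tl α β (m-1) - Tl α β nn :=
      Tl_diff_ge hα hαβ nn (m-1) (by omega)
    have hc1 : ((m - 1 - nn : ℕ):ℝ) = ((m - nn : ℕ):ℝ) - 1 := by
      have : (m - 1 - nn) + 1 = m - nn := by omega
      have h2 : ((m - 1 - nn : ℕ):ℝ) + 1 = ((m - nn : ℕ):ℝ) := by exact_mod_cast congrArg (Nat.cast (R := ℝ)) this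
      linarith
    rw [hc1] at hTd
    have h5 : (((m - nn:ℕ):ℝ) - 1) * Real.log 2 ≤ (((m-nn:ℕ):ℝ) - 1) * (γ * Lb β) := by
      have hge : (0:ℝ) ≤ ((m - nn:ℕ):ℝ) - 1 := by
        have : (1:ℝ) ≤ ((m-nn:ℕ):ℝ) := by exact_mod_cast Nat.one_le_iff_ne_zero.mpr (by omega)
        linarith
      nlinarith
    have h6 : (((m-nn:ℕ):ℝ) - 1) * (γ * Lb β) ≤ γ * (Tl α β (m-1) - Tl α β nn) := by
      have hge : (0:ℝ) ≤ ((m - nn:ℕ):ℝ) - 1 := by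
        have : (1:ℝ) ≤ ((m-nn:ℕ):ℝ) := by exact_mod_cast Nat.one_le_iff_ne_zero.mpr (by omega)
        linarith
      nlinarith
    nlinarith

/-- membership for the block dimension functions -/
lemma mem_of_Phi (hα : 0 < α) (hαβ : α < β) (hβ : β < 1) {Ak : ℕ → ℕ} (γ : ℝ)
    (hγα : α < γ) (hγβ : γ ≤ β) (C₀ : ℝ) (hC₀0 : 0 ≤ C₀)
    (hC₀ : ∀ k : ℕ, rhof α β γ * ((k:ℝ)+1) ≤ (Ak k : ℝ) + C₀)
    (d₀ : ℕ) (hd₀ : 2 * (bconst β)^d₀ ≤ 1 - 2*(bconst β)) :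
    γ ∈ dimSet (Phi α β Ak) (ESet (sc α β)) := by
  have hγ0 : 0 ≤ γ := by linarith [lt_trans hα hγα]
  have hρ := rhof_nonneg hα hαβ hβ hγα hγβ
  obtain ⟨Ccb, hCcb0, hCcb⟩ := comb_main hα hαβ Ak (rhof α β γ) C₀ hρ hC₀0 hC₀
  apply mem_master hα hαβ hβ _ γ hγ0 d₀ hd₀ _
  apply HW_of_comb hα hαβ hβ _ hγα hγβ Ccb hCcb0 d₀
  intro R r hr hrR hRR hR0 hRc
  have hrle : r ≤ R := le_trans hrR hRR
  set nn := lvl α β R with hnn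
  set m := lvl α β r with hm
  have hnblk1 : 16 ≤ nblk 1 := by have := nblk_ge 1; omega
  have hnn_big : nblk 1 + d₀ + 3 < nn := lvl_gt hα hαβ hβ hR0 hRc.le
  have hnm : nn ≤ m := lvl_le_lvl hα hαβ hβ hr hrle
  have hR1 : R < 1 := lt_of_lt_of_le hRc (sc_le_one hα hαβ _)
  have hkapeq : kapR α β R = kap nn := kapR_eq_kap hα hαβ hβ hR0 (by omega)
  have hlog1 : Real.log r ≤ Real.log R - Lam α β Ak (kapR α β R) := by
    have h1 : Real.log r ≤ Real.log (R ^ (1 + Phi α β Ak R)) := Real.log_le_log hr hrR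
    rwa [Phi_rpow Ak hR0 hR1, Real.log_exp] at h1
  have hlog2 : Real.log R ≤ -(Tl α β (nn-1)) := by
    have h1 : R ≤ sc α β (nn-1) := lvl_min (by omega)
    have h2 := Real.log_le_log hR0 h1
    rwa [sc, Real.log_exp] at h2
  have hlog3 : -(Tl α β m) < Real.log r := by
    have h1 : sc α β m < r := lvl_spec hα hαβ hβ hr
    have h2 := Real.log_lt_log (sc_pos m) h1
    rwa [sc, Real.log_exp] at h2
  have hTcond : Lam α β Ak (kap ((nn-1)+1)) ≤ Tl α β m - Tl α β (nn-1) := by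
    rw [show nn - 1 + 1 = nn by omega, ← hkapeq]
    linarith
  exact hCcb (nn-1) m (by omega) hTcond

/-- membership for the constant dimension functions -/
lemma mem_of_const (hα : 0 < α) (hαβ : α < β) (hβ : β < 1) {θ : ℝ} (hθ0 : 0 < θ)
    (hθ1 : θ < 1) (γ : ℝ) (hγα : α < γ) (hγβ : γ ≤ β)
    (d₀ : ℕ) (hd₀ : 2 * (bconst β)^d₀ ≤ 1 - 2*(bconst β)) :
    γ ∈ dimSet (fun _ => 1/θ - 1) (ESet (sc α β)) := by
  have hγ0 : 0 ≤ γ := by linarith [lt_trans hα hγα]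
  have hρ := rhof_nonneg hα hαβ hβ hγα hγβ
  have hδ : 0 < 1/θ - 1 := by
    have h1 : 1 < 1/θ := (one_lt_div hθ0).mpr hθ1
    linarith
  obtain ⟨Ccb, hCcb0, hCcb⟩ := comb_const hα hαβ (1/θ - 1) (rhof α β γ) hδ hρ
  apply mem_master hα hαβ hβ _ γ hγ0 d₀ hd₀ _
  apply HW_of_comb hα hαβ hβ _ hγα hγβ Ccb hCcb0 d₀
  intro R r hr hrR hRR hR0 hRc
  have hrle : r ≤ R := le_trans hrR hRR
  set nn := lvl α β R with hnn
  set m := lvl α β r with hm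
  have hnblk1 : 16 ≤ nblk 1 := by have := nblk_ge 1; omega
  have hnn_big : nblk 1 + d₀ + 3 < nn := lvl_gt hα hαβ hβ hR0 hRc.le
  have hnm : nn ≤ m := lvl_le_lvl hα hαβ hβ hr hrle
  have hR1 : R < 1 := lt_of_lt_of_le hRc (sc_le_one hα hαβ _)
  have hlog1 : Real.log r ≤ (1 + (1/θ - 1)) * Real.log R := by
    have h1 : Real.log r ≤ Real.log (R ^ (1 + (1/θ - 1))) := Real.log_le_log hr hrR
    rwa [Real.log_rpow hR0] at h1
  have hlog2 : Real.log R ≤ -(Tl α β (nn-1)) := by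
    have h1 : R ≤ sc α β (nn-1) := lvl_min (by omega)
    have h2 := Real.log_le_log hR0 h1
    rwa [sc, Real.log_exp] at h2
  have hlog3 : -(Tl α β m) < Real.log r := by
    have h1 : sc α β m < r := lvl_spec hα hαβ hβ hr
    have h2 := Real.log_lt_log (sc_pos m) h1
    rwa [sc, Real.log_exp] at h2
  have hTn0 : 0 ≤ Tl α β (nn-1) := Tl_nonneg hα hαβ _
  have hTcond : (1/θ - 1) * Tl α β (nn-1) ≤ Tl α β m - Tl α β (nn-1) := by
    have h4 : (1 + (1/θ - 1)) * Real.log R ≤ (1 + (1/θ - 1)) * (-(Tl α β (nn-1))) := by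
      apply mul_le_mul_of_nonneg_left hlog2 (by linarith)
    nlinarith
  exact hCcb (nn-1) m (by omega) hTcond

end inst

section vio
variable {α β : ℝ}

lemma ofReal_lt_pow2 {x : ℝ} {k : ℕ} (h : x < (2:ℝ)^k) :
    ENNReal.ofReal x < (2:ℝ≥0∞)^k := by
  rw [pow2_cast]
  exact (ENNReal.ofReal_lt_ofReal_iff (by positivity)).mpr h

lemma tendsto_linear (a b : ℝ) (ha : 0 < a) :
    Tendsto (fun j : ℕ => a*((j:ℝ)+1) + b) atTop atTop := by
  have h1 : Tendsto (fun j : ℕ => a*(j:ℝ)) atTop atTop :=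
    Tendsto.const_mul_atTop ha tendsto_natCast_atTop_atTop
  have h2 : (fun j : ℕ => a*((j:ℝ)+1) + b) = fun j : ℕ => a*(j:ℝ) + (a + b) := by
    funext j; ring
  rw [h2]
  exact tendsto_atTop_add_const_right _ _ h1

lemma InBlock_of (k i : ℕ) (h1 : nblk k ≤ i) (h2 : i < endblk k) : InBlock i := ⟨k, h1, h2⟩

lemma Tl_block (hα : 0 < α) (hαβ : α < β) (k : ℕ) :
    Tl α β (endblk k) - Tl α β (nblk k) = ((k:ℝ)+1) * Lb β := by
  have hle : nblk k ≤ endblk k := by unfold endblk; omega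
  rw [Tl_diff _ _ hle]
  have e1 : ∀ i ∈ Finset.Ico (nblk k) (endblk k), lev α β i = Lb β := by
    intro i hi
    simp only [Finset.mem_Ico] at hi
    simp [lev, InBlock_of k i hi.1 hi.2]
  rw [Finset.sum_congr rfl e1, Finset.sum_const, Nat.card_Ico]
  have : endblk k - nblk k = k + 1 := by unfold endblk; omega
  rw [this, nsmul_eq_mul]
  push_cast
  ring

lemma not_InBlock_after (k j i : ℕ) (hij : endblk k ≤ i) (hi : i < endblk k + j)
    (hj : endblk k + j ≤ nblk (k+1)) : ¬ InBlock i := by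
  rintro ⟨j', hj1, hj2⟩
  rcases le_or_gt j' k with h | h
  · have := endblk_mono h
    omega
  · have : nblk (k+1) ≤ nblk j' := nblk_strictMono.monotone h
    omega

lemma Tl_after (hα : 0 < α) (hαβ : α < β) (k j : ℕ) (hj : endblk k + j ≤ nblk (k+1)) :
    Tl α β (endblk k + j) - Tl α β (endblk k) = (j:ℝ) * La α := by
  rw [Tl_diff _ _ (by omega)]
  have e1 : ∀ i ∈ Finset.Ico (endblk k) (endblk k + j), lev α β i = La α := by
    intro i hi
    simp only [Finset.mem_Ico] at hi
    simp [lev, not_InBlock_after k j i hi.1 hi.2 hj]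
  rw [Finset.sum_congr rfl e1, Finset.sum_const, Nat.card_Ico]
  have : endblk k + j - endblk k = j := by omega
  rw [this, nsmul_eq_mul]

/-- uniform lower bound : nothing below α is in any dimension set of a
nonnegative Φ -/
lemma not_mem_low (hα : 0 < α) (hαβ : α < β) (hβ : β < 1) (Φ : ℝ → ℝ)
    (hΦ0 : ∀ x ∈ Ioo (0:ℝ) 1, 0 ≤ Φ x) (γ : ℝ) (hγα : γ < α) :
    γ ∉ dimSet Φ (ESet (sc α β)) := by
  have hnice := nice_sc hα hαβ hβ
  have hLa := La_pos (α := α) hα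
  have hlog2 := log2_pos
  have hbb := bconst_lt_half hα hαβ hβ
  have hbb0 := bconst_pos (β := β)
  set δb := 1 - 2*bconst β with hδb
  have hδb0 : 0 < δb := by rw [hδb]; linarith
  rintro ⟨c₁, hc₁, c₂, hc₂, hall⟩
  obtain ⟨n₀', hn₀'⟩ := exists_sc_lt hα hαβ hβ (min c₁ 1) (by positivity)
  set n₀ := n₀' + 1 with hn₀
  have hRm : sc α β n₀ < min c₁ 1 :=
    lt_of_lt_of_le (sc_anti hα hαβ (by omega)) hn₀'.le
  set R := sc α β n₀ with hR
  have hR0 : 0 < R := sc_pos _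
  have hR1 : R < 1 := lt_of_lt_of_le hRm (min_le_right _ _)
  have hRc₁ : R < c₁ := lt_of_lt_of_le hRm (min_le_left _ _)
  have hΦR : 0 ≤ Φ R := hΦ0 R ⟨hR0, hR1⟩
  have hRR : R ^ (1 + Φ R) ≤ R := by
    calc R ^ (1 + Φ R) ≤ R ^ (1:ℝ) :=
          Real.rpow_le_rpow_of_exponent_ge hR0 hR1.le (by linarith)
      _ = R := Real.rpow_one R
  have hρ0 : 0 < R ^ (1 + Φ R) := Real.rpow_pos_of_pos hR0 _
  -- eventual conditions on j
  have hcoef : 0 < Real.log 2 - γ * La α := by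
    have h1 : γ * La α < α * La α := by
      apply mul_lt_mul_of_pos_right hγα hLa
    have h2 : α * La α = Real.log 2 := by
      rw [La]; field_simp
    linarith
  set q := 4 / δb with hq
  have hq1 : 1 ≤ q := by
    rw [hq, le_div_iff₀ hδb0]
    have : bconst β ≥ 0 := hbb0.le
    nlinarith
  have hev1 : ∀ᶠ j : ℕ in atTop, sc α β (j + n₀) < R ^ (1 + Φ R) :=
    ((sc_tendsto hα hαβ hβ).comp (tendsto_add_atTop_nat n₀)).eventually_lt_const hρ0
  have hev2 : ∀ᶠ j : ℕ in atTop,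
      Real.log c₂ + γ * Real.log q + γ * La α * (j:ℝ) < ((j:ℝ)+1) * Real.log 2 := by
    have h1 : Tendsto (fun j : ℕ => (Real.log 2 - γ*La α)*((j:ℝ)+1) + γ*La α) atTop atTop :=
      tendsto_linear _ _ hcoef
    filter_upwards [h1.eventually_gt_atTop (Real.log c₂ + γ * Real.log q)] with j hj
    nlinarith [hj]
  have hev3 : ∀ᶠ j : ℕ in atTop, c₂ < (2:ℝ)^(j+1) := by
    have h1 : Tendsto (fun j : ℕ => Real.log 2 *((j:ℝ)+1) + 0) atTop atTop :=
      tendsto_linear _ _ hlog2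
    filter_upwards [h1.eventually_gt_atTop (Real.log c₂)] with j hj
    have h2 : Real.log c₂ < ((j:ℝ)+1) * Real.log 2 := by linarith
    have h3 := Real.exp_lt_exp.mpr h2
    rw [Real.exp_log hc₂] at h3
    rw [exp_nat_log2 (j+1)]
    calc c₂ < Real.exp (((j:ℝ)+1) * Real.log 2) := h3
      _ = Real.exp (((j+1 : ℕ):ℝ) * Real.log 2) := by push_cast; ring_nf
  obtain ⟨j, hj1, hj2, hj3⟩ := (hev1.and (hev2.and hev3)).exists
  set m := n₀ + 1 + j with hm
  set r := δb * sc α β (m-1) / 4 with hr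
  have hscm : sc α β (m-1) = sc α β (j + n₀) := by rw [hm]; congr 1; omega
  have hr0 : 0 < r := by
    rw [hr]
    have := sc_pos (α := α) (β := β) (m-1)
    positivity
  have hrρ : r ≤ R ^ (1 + Φ R) := by
    rw [hr, hscm]
    have h1 := hj1
    have h2 : δb * sc α β (j + n₀) / 4 ≤ sc α β (j + n₀) := by
      have := sc_pos (α := α) (β := β) (j + n₀)
      rw [div_le_iff₀ (by norm_num : (0:ℝ) < 4)]
      nlinarith
    linarith
  have hz : cpt (sc α β) (fun _ => false) ∈ ESet (sc α β) := ⟨_, rfl⟩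
  have hcontra := hall r R hr0 hrρ hRR hRc₁ _ hz
  -- lower bound on covering number
  have hlow := count_lower hnice (fun _ => false) R r n₀ m (by omega) (by omega)
    (le_refl R) (by
      rw [hr]
      have := sc_pos (α := α) (β := β) (m-1)
      nlinarith)
  have hmn : m - n₀ = j + 1 := by omega
  rw [hmn] at hlow
  -- upper bound on the target
  have hRr : R / r = q * Real.exp (Tl α β (m-1) - Tl α β n₀) := by
    rw [hr, hR, hq]
    have h3 : Real.exp (Tl α β (m-1) - Tl α β n₀) = sc α β n₀ / sc α β (m-1) := by
      rw [sc, sc, ← Real.exp_sub]; ring_nf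
    rw [h3]
    have h4 := sc_pos (α := α) (β := β) (m-1)
    field_simp
  have hfin : c₂ * (R/r)^γ < (2:ℝ)^(j+1) := by
    rcases le_or_gt 0 γ with hγ0 | hγ0
    · -- 0 ≤ γ < α
      have hTd : Tl α β (m-1) - Tl α β n₀ ≤ (j:ℝ) * La α := by
        have h1 := Tl_diff_le hα hαβ n₀ (m-1) (by omega)
        have h2 : ((m - 1 - n₀ : ℕ):ℝ) = (j:ℝ) := by
          have : m - 1 - n₀ = j := by omega
          rw [this]
        rwa [h2] at h1
      have hrq : (R/r)^γ = q^γ * Real.exp (γ * (Tl α β (m-1) - Tl α β n₀)) := by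
        rw [hRr, Real.mul_rpow (by linarith) (Real.exp_pos _).le, mul_comm γ, ← exp_rpow']
      have h5 : Real.exp (γ * (Tl α β (m-1) - Tl α β n₀)) ≤ Real.exp (γ * ((j:ℝ) * La α)) := by
        rw [Real.exp_le_exp]
        exact mul_le_mul_of_nonneg_left hTd hγ0
      have h6 : q^γ = Real.exp (γ * Real.log q) := by
        rw [Real.rpow_def_of_pos (by linarith), mul_comm]
      have h7 : c₂ * (R/r)^γ ≤ c₂ * (Real.exp (γ * Real.log q) * Real.exp (γ * ((j:ℝ) * La α))) := by
        rw [hrq, h6]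
        apply mul_le_mul_of_nonneg_left _ hc₂.le
        apply mul_le_mul_of_nonneg_left h5 (Real.exp_pos _).le
      have h8 : c₂ * (Real.exp (γ * Real.log q) * Real.exp (γ * ((j:ℝ) * La α)))
          = Real.exp (Real.log c₂ + γ * Real.log q + γ * La α * (j:ℝ)) := by
        rw [Real.exp_add, Real.exp_add, Real.exp_log hc₂]
        ring
      rw [exp_nat_log2 (j+1)]
      have h9 : Real.exp (Real.log c₂ + γ * Real.log q + γ * La α * (j:ℝ))
          < Real.exp (((j+1:ℕ):ℝ) * Real.log 2) := by
        rw [Real.exp_lt_exp]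
        push_cast
        linarith [hj2]
      linarith [h7, h8 ▸ h7]
    · -- γ < 0
      have hRr1 : 1 ≤ R / r := by
        rw [hRr]
        have h1 : 0 ≤ Tl α β (m-1) - Tl α β n₀ := by
          have := Tl_diff_ge hα hαβ n₀ (m-1) (by omega)
          have h2 := Lb_pos (α := α) (β := β) hα hαβ
          have hc0 : (0:ℝ) ≤ ((m - 1 - n₀ : ℕ):ℝ) := by positivity
          nlinarith
        have h2 : 1 ≤ Real.exp (Tl α β (m-1) - Tl α β n₀) := Real.one_le_exp h1
        nlinarith
      have h1 : (R/r)^γ ≤ 1 := Real.rpow_le_one_of_one_le_of_nonpos hRr1 hγ0.le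
      have h2 : c₂ * (R/r)^γ ≤ c₂ := by
        have h3 : 0 ≤ (R/r)^γ := Real.rpow_nonneg (by positivity) γ
        nlinarith
      linarith
  have hofrlt := ofReal_lt_pow2 hfin
  have : (2:ℝ≥0∞)^(j+1) ≤ ENNReal.ofReal (c₂ * (R/r)^γ) := le_trans hlow hcontra
  exact absurd (lt_of_le_of_lt this hofrlt) (lt_irrefl _)

end vio

section vio2
variable {α β : ℝ}

lemma sep_helper (hα : 0 < α) (hαβ : α < β) (hβ : β < 1) (d₀ : ℕ)
    (hd₀ : 2 * (bconst β)^d₀ ≤ 1 - 2*(bconst β)) (m : ℕ) (hm : 1 ≤ m) :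
    2 * sc α β (m + d₀) < (1 - 2*(bconst β)) * sc α β (m-1) := by
  have hbb := bconst_lt_half hα hαβ hβ
  have hbb0 := bconst_pos (β := β)
  have h1 : sc α β (m + d₀) ≤ sc α β (m-1) * (bconst β)^(d₀+1) := by
    have := sc_ratio hα hαβ (m-1) (m+d₀) (by omega)
    rwa [show m + d₀ - (m-1) = d₀ + 1 by omega] at this
  have h2 : 0 < sc α β (m-1) := sc_pos _
  have h3 : (0:ℝ) < (bconst β)^d₀ := pow_pos hbb0 d₀
  have h4 : (bconst β)^(d₀+1) = bconst β * (bconst β)^d₀ := by ring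
  have h5 : 0 < 1 - 2*(bconst β) := by linarith
  have hbb1 : bconst β < 1 := by linarith
  nlinarith [mul_pos h2 h3]

lemma kapR_sc_nblk (hα : 0 < α) (hαβ : α < β) (hβ : β < 1) (k : ℕ) :
    kapR α β (sc α β (nblk k)) = k := by
  have hex := exists_kapR hα hαβ hβ (sc_pos (α := α) (β := β) (nblk k))
  rw [kapR, dif_pos hex]
  apply le_antisymm
  · apply Nat.find_min' hex
    exact sc_anti hα hαβ (by unfold endblk; omega)
  · by_contra hc
    push_neg at hc
    have h1 := Nat.find_spec hex
    have hk1 : 1 ≤ k := by omega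
    have h2 : endblk (Nat.find hex) ≤ endblk (k-1) := endblk_mono (by omega)
    have h3 : endblk (k-1) < nblk k := by
      have := endblk_lt (k-1)
      rwa [show k-1+1 = k by omega] at this
    have h4 : sc α β (nblk k) < sc α β (endblk (Nat.find hex)) :=
      sc_anti hα hαβ (by omega)
    linarith

lemma eventually_sc_nblk_lt (hα : 0 < α) (hαβ : α < β) (hβ : β < 1) {c₁ : ℝ}
    (hc₁ : 0 < c₁) : ∀ᶠ k : ℕ in atTop, sc α β (nblk k) < c₁ :=
  ((sc_tendsto hα hαβ hβ).comp nblk_strictMono.tendsto_atTop).eventually_lt_const hc₁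

/-- the Assouad dimension is at least β : no γ < β is in the Φ ≡ 0 set -/
lemma not_mem_zero (hα : 0 < α) (hαβ : α < β) (hβ : β < 1) (d₀ : ℕ)
    (hd₀ : 2 * (bconst β)^d₀ ≤ 1 - 2*(bconst β)) (γ : ℝ) (hγ0 : 0 ≤ γ) (hγβ : γ < β) :
    γ ∉ dimSet (fun _ => (0:ℝ)) (ESet (sc α β)) := by
  have hnice := nice_sc hα hαβ hβ
  have hLa := La_pos (α := α) hα
  have hLb := Lb_pos (α := α) (β := β) hα hαβ
  have hlog2 := log2_pos
  have hβ0 : 0 < β := lt_trans hα hαβ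
  rintro ⟨c₁, hc₁, c₂, hc₂, hall⟩
  have hcoefb : 0 < Real.log 2 - γ * Lb β := by
    have h1 : γ * Lb β < β * Lb β := mul_lt_mul_of_pos_right hγβ hLb
    have h2 : β * Lb β = Real.log 2 := by rw [Lb]; field_simp
    linarith
  have hev2 : ∀ᶠ k : ℕ in atTop,
      Real.log c₂ + γ * (((k:ℝ)+1) * Lb β + (d₀:ℝ) * La α) < ((k:ℝ)+1) * Real.log 2 := by
    have h1 := tendsto_linear _ (0:ℝ) hcoefb
    filter_upwards [h1.eventually_gt_atTop (Real.log c₂ + γ * ((d₀:ℝ) * La α))] with k hk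
    nlinarith [hk]
  obtain ⟨k, hk1, hk2⟩ := ((eventually_sc_nblk_lt hα hαβ hβ hc₁).and hev2).exists
  set n := nblk k with hn
  set mm := endblk k with hmm
  set R := sc α β n with hR
  set r := sc α β (mm + d₀) with hr
  have hnm : n ≤ mm := by rw [hn, hmm]; unfold endblk; omega
  have hrpow : R ^ (1 + (0:ℝ)) = R := by norm_num
  have hz : cpt (sc α β) (fun _ => false) ∈ ESet (sc α β) := ⟨_, rfl⟩
  have hcontra := hall r R (sc_pos _) (by
      rw [hrpow]
      exact (sc_anti hα hαβ).antitone (by omega)) (by rw [hrpow]) hk1 _ hz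
  have hmm1 : 1 ≤ mm := by rw [hmm]; unfold endblk; omega
  have hlow := count_lower hnice (fun _ => false) R r n mm hnm hmm1
    (le_refl R) (sep_helper hα hαβ hβ d₀ hd₀ mm hmm1)
  have hWn : mm - n = k + 1 := by rw [hmm, hn]; unfold endblk; omega
  rw [hWn] at hlow
  -- real inequality
  have hTd : Tl α β (mm + d₀) - Tl α β n ≤ ((k:ℝ)+1) * Lb β + (d₀:ℝ) * La α := by
    have h1 : Tl α β mm - Tl α β n = ((k:ℝ)+1) * Lb β := Tl_block hα hαβ k
    have h2 : Tl α β (mm+d₀) - Tl α β mm ≤ ((mm + d₀ - mm : ℕ):ℝ) * La α :=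
      Tl_diff_le hα hαβ mm (mm+d₀) (by omega)
    rw [show mm + d₀ - mm = d₀ by omega] at h2
    linarith
  have hRr : R / r = Real.exp (Tl α β (mm + d₀) - Tl α β n) := by
    rw [hR, hr, sc, sc, ← Real.exp_sub]
    ring_nf
  have hfin : c₂ * (R/r)^γ < (2:ℝ)^(k+1) := by
    have h1 : (R/r)^γ = Real.exp (γ * (Tl α β (mm + d₀) - Tl α β n)) := by
      rw [hRr, mul_comm γ, ← exp_rpow']
    have h2 : γ * (Tl α β (mm + d₀) - Tl α β n) ≤ γ * (((k:ℝ)+1) * Lb β + (d₀:ℝ) * La α) :=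
      mul_le_mul_of_nonneg_left hTd hγ0
    have h3 : c₂ * (R/r)^γ = Real.exp (Real.log c₂ + γ * (Tl α β (mm + d₀) - Tl α β n)) := by
      rw [h1, Real.exp_add, Real.exp_log hc₂]
    rw [h3, exp_nat_log2 (k+1)]
    rw [Real.exp_lt_exp]
    push_cast
    linarith
  have hofrlt := ofReal_lt_pow2 hfin
  have hle2 : (2:ℝ≥0∞)^(k+1) ≤ ENNReal.ofReal (c₂ * (R/r)^γ) := le_trans hlow hcontra
  exact absurd (lt_of_le_of_lt hle2 hofrlt) (lt_irrefl _)

/-- lower bound for the block dimension functions -/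
lemma not_mem_Phi (hα : 0 < α) (hαβ : α < β) (hβ : β < 1) {Ak : ℕ → ℕ}
    (hAk2 : ∀ k, Ak k ≤ (k+1)^2) (d₀ : ℕ)
    (hd₀ : 2 * (bconst β)^d₀ ≤ 1 - 2*(bconst β)) (γ : ℝ) (hγ0 : 0 ≤ γ)
    (hvio : Tendsto (fun k : ℕ =>
      (((k:ℝ)+1) + (Ak k:ℝ)) * Real.log 2 - γ * Lam α β Ak k) atTop atTop) :
    γ ∉ dimSet (Phi α β Ak) (ESet (sc α β)) := by
  have hnice := nice_sc hα hαβ hβ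
  have hLa := La_pos (α := α) hα
  have hLb := Lb_pos (α := α) (β := β) hα hαβ
  have hlog2 := log2_pos
  rintro ⟨c₁, hc₁, c₂, hc₂, hall⟩
  have hev2 : ∀ᶠ k : ℕ in atTop,
      Real.log c₂ + γ * Lam α β Ak k + γ * ((d₀:ℝ) * La α)
        < (((k:ℝ)+1) + (Ak k:ℝ)) * Real.log 2 := by
    filter_upwards [hvio.eventually_gt_atTop (Real.log c₂ + γ * ((d₀:ℝ) * La α))] with k hk
    linarith
  obtain ⟨k, hk1, hk2⟩ := ((eventually_sc_nblk_lt hα hαβ hβ hc₁).and hev2).exists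
  set n := nblk k with hn
  set mk := endblk k + Ak k with hmk
  have hmkb : mk ≤ nblk (k+1) := by
    have h1 := growth k
    have h2 : Ak k ≤ (k+3)^3 := by
      calc Ak k ≤ (k+1)^2 := hAk2 k
        _ ≤ (k+3)^2 := Nat.pow_le_pow_left (by omega) 2
        _ ≤ (k+3)^3 := Nat.pow_le_pow_right (by omega) (by omega)
    omega
  set R := sc α β n with hR
  set r := sc α β (mk + d₀) with hr
  have hn1 : 1 ≤ n := by have := nblk_ge k; omega
  have hR1 : R < 1 := sc_lt_one hα hαβ hn1
  have hnmk : n ≤ mk := by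
    rw [hn, hmk]
    have := nblk_ge k
    unfold endblk
    omega
  -- the rpow identity
  have hTmk : Tl α β mk = Tl α β n + Lam α β Ak k := by
    have h1 : Tl α β (endblk k) - Tl α β n = ((k:ℝ)+1) * Lb β := Tl_block hα hαβ k
    have h2 : Tl α β (endblk k + Ak k) - Tl α β (endblk k) = ((Ak k:ℕ):ℝ) * La α :=
      Tl_after hα hαβ k (Ak k) hmkb
    rw [Lam]
    rw [hmk]
    linarith
  have hrpow : R ^ (1 + Phi α β Ak R) = sc α β mk := by
    rw [Phi_rpow Ak (sc_pos _) hR1, hn, kapR_sc_nblk hα hαβ hβ k]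
    rw [sc, sc, Real.log_exp]
    congr 1
    rw [hn] at hTmk
    linarith [hTmk]
  have hz : cpt (sc α β) (fun _ => false) ∈ ESet (sc α β) := ⟨_, rfl⟩
  have hcontra := hall r R (sc_pos _) (by
      rw [hrpow]
      exact (sc_anti hα hαβ).antitone (by omega)) (by
      rw [hrpow]
      exact (sc_anti hα hαβ).antitone hnmk) hk1 _ hz
  have hlow := count_lower hnice (fun _ => false) R r n mk hnmk (by omega)
    (le_refl R) (sep_helper hα hαβ hβ d₀ hd₀ mk (by omega))
  have hWn : mk - n = (k + 1) + Ak k := by rw [hmk, hn]; unfold endblk; omega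
  rw [hWn] at hlow
  -- real inequality
  have hTd : Tl α β (mk + d₀) - Tl α β n ≤ Lam α β Ak k + (d₀:ℝ) * La α := by
    have h2 : Tl α β (mk+d₀) - Tl α β mk ≤ ((mk + d₀ - mk : ℕ):ℝ) * La α :=
      Tl_diff_le hα hαβ mk (mk+d₀) (by omega)
    rw [show mk + d₀ - mk = d₀ by omega] at h2
    linarith [hTmk]
  have hRr : R / r = Real.exp (Tl α β (mk + d₀) - Tl α β n) := by
    rw [hR, hr, sc, sc, ← Real.exp_sub]
    ring_nf
  have hfin : c₂ * (R/r)^γ < (2:ℝ)^((k+1) + Ak k) := by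
    have h1 : (R/r)^γ = Real.exp (γ * (Tl α β (mk + d₀) - Tl α β n)) := by
      rw [hRr, mul_comm γ, ← exp_rpow']
    have h2 : γ * (Tl α β (mk + d₀) - Tl α β n) ≤ γ * (Lam α β Ak k + (d₀:ℝ) * La α) :=
      mul_le_mul_of_nonneg_left hTd hγ0
    have h3 : c₂ * (R/r)^γ = Real.exp (Real.log c₂ + γ * (Tl α β (mk + d₀) - Tl α β n)) := by
      rw [h1, Real.exp_add, Real.exp_log hc₂]
    rw [h3, exp_nat_log2 ((k+1) + Ak k)]
    rw [Real.exp_lt_exp]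
    push_cast
    nlinarith [hk2]
  have hofrlt := ofReal_lt_pow2 hfin
  have hle2 : (2:ℝ≥0∞)^((k+1) + Ak k) ≤ ENNReal.ofReal (c₂ * (R/r)^γ) := le_trans hlow hcontra
  exact absurd (lt_of_le_of_lt hle2 hofrlt) (lt_irrefl _)

end vio2

-- ==== Part 10 : assembly ====

section assem
variable {α β : ℝ}

lemma sInf_interval_eq {S : Set ℝ} {x : ℝ} (h1 : ∀ γ ∈ S, x ≤ γ)
    (h2 : ∀ γ, x < γ → γ ∈ S) : sInf S = x := by
  apply le_antisymm
  · apply le_of_forall_pos_le_add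
    intro ε hε
    exact csInf_le ⟨x, fun γ hγ => h1 γ hγ⟩ (h2 _ (by linarith))
  · exact le_csInf ⟨x+1, h2 _ (by linarith)⟩ h1

lemma exists_d₀ (hα : 0 < α) (hαβ : α < β) (hβ : β < 1) :
    ∃ d₀ : ℕ, 2 * (bconst β)^d₀ ≤ 1 - 2*(bconst β) := by
  have hbb := bconst_lt_half hα hαβ hβ
  have hbb0 := bconst_pos (β := β)
  have hδ : 0 < (1 - 2*(bconst β))/2 := by linarith
  obtain ⟨d, hd⟩ := exists_pow_lt_of_lt_one hδ (by linarith : bconst β < 1)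
  exact ⟨d, by nlinarith⟩

/-- every dimension set of a nonnegative Φ has infimum in [α, β] -/
lemma dim_between (hα : 0 < α) (hαβ : α < β) (hβ : β < 1) (Φ : ℝ → ℝ)
    (hΦ0 : ∀ x ∈ Ioo (0:ℝ) 1, 0 ≤ Φ x) :
    α ≤ upperPhiDim Φ (ESet (sc α β)) ∧ upperPhiDim Φ (ESet (sc α β)) ≤ β := by
  obtain ⟨d₀, hd₀⟩ := exists_d₀ hα hαβ hβ
  rw [upperPhiDim_eq]
  have hlb : ∀ γ ∈ dimSet Φ (ESet (sc α β)), α ≤ γ := by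
    intro γ hγ
    by_contra h
    push_neg at h
    exact not_mem_low hα hαβ hβ Φ hΦ0 γ h hγ
  constructor
  · exact le_csInf ⟨β+1, mem_triv hα hαβ hβ Φ d₀ hd₀ _ (by linarith)⟩ hlb
  · apply le_of_forall_pos_le_add
    intro ε hε
    exact csInf_le ⟨α, hlb⟩ (mem_triv hα hαβ hβ Φ d₀ hd₀ _ (by linarith))

/-- the Assouad dimension equals β -/
lemma dim_zero (hα : 0 < α) (hαβ : α < β) (hβ : β < 1) :
    upperPhiDim (fun _ => (0:ℝ)) (ESet (sc α β)) = β := by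
  obtain ⟨d₀, hd₀⟩ := exists_d₀ hα hαβ hβ
  rw [upperPhiDim_eq]
  apply sInf_interval_eq
  · intro γ hγ
    by_contra h
    push_neg at h
    rcases le_or_gt 0 γ with h0 | h0
    · exact not_mem_zero hα hαβ hβ d₀ hd₀ γ h0 h hγ
    · exact not_mem_low hα hαβ hβ _ (fun _ _ => le_rfl) γ (by linarith) hγ
  · intro γ hγ
    exact mem_triv hα hαβ hβ _ d₀ hd₀ γ hγ

/-- the upper Assouad spectra all equal α -/
lemma dim_const (hα : 0 < α) (hαβ : α < β) (hβ : β < 1) {θ : ℝ} (hθ0 : 0 < θ)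
    (hθ1 : θ < 1) :
    upperPhiDim (fun _ => 1/θ - 1) (ESet (sc α β)) = α := by
  obtain ⟨d₀, hd₀⟩ := exists_d₀ hα hαβ hβ
  have hδ : (0:ℝ) ≤ 1/θ - 1 := by
    have h1 : 1 < 1/θ := (one_lt_div hθ0).mpr hθ1
    linarith
  rw [upperPhiDim_eq]
  apply sInf_interval_eq
  · intro γ hγ
    by_contra h
    push_neg at h
    exact not_mem_low hα hαβ hβ _ (fun _ _ => hδ) γ h hγ
  · intro γ hγ
    rcases le_or_gt γ β with hγβ | hγβ
    · exact mem_of_const hα hαβ hβ hθ0 hθ1 γ hγ hγβ d₀ hd₀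
    · exact mem_triv hα hαβ hβ _ d₀ hd₀ γ hγβ

lemma isDimFun_zero : IsDimensionFunction (fun _ : ℝ => (0:ℝ)) := by
  refine ⟨fun _ _ => le_rfl, ?_, ?_⟩
  · intro x hx y hy hxy
    norm_num [Real.rpow_one]
    exact hxy
  · have he : (fun x : ℝ => x ^ (1 + (0:ℝ))) = fun x : ℝ => x := by
      funext x
      norm_num [Real.rpow_one]
    rw [he]
    exact tendsto_id.mono_left nhdsWithin_le_nhds

end assem

section akx
variable {α β : ℝ}

noncomputable def Akx (α β x : ℝ) : ℕ → ℕ :=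
  if x ≤ α then fun k => (k+1)^2
  else fun k => min (Nat.ceil (rhof α β x * ((k:ℝ)+1))) ((k+1)^2)

lemma Akx_mono (hα : 0 < α) (hαβ : α < β) (hβ : β < 1) {x : ℝ} (hxβ : x ≤ β) :
    Monotone (Akx α β x) := by
  rw [Akx]
  split
  · intro i j hij
    exact Nat.pow_le_pow_left (by omega) 2
  · rename_i hx
    push_neg at hx
    have hρ : 0 ≤ rhof α β x := rhof_nonneg hα hαβ hβ hx hxβ
    intro i j hij
    apply min_le_min
    · apply Nat.ceil_le_ceil
      have : ((i:ℝ)+1) ≤ ((j:ℝ)+1) := by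
        have : (i:ℝ) ≤ j := by exact_mod_cast hij
        linarith
      nlinarith
    · exact Nat.pow_le_pow_left (by omega) 2

lemma Akx_le_sq (α β x : ℝ) (k : ℕ) : Akx α β x k ≤ (k+1)^2 := by
  rw [Akx]
  split
  · exact le_rfl
  · exact min_le_right _ _

lemma rhof_anti (hα : 0 < α) (hαβ : α < β) {x γ : ℝ} (hx : α < x) (hxγ : x ≤ γ)
    (hγβ : γ ≤ β) : rhof α β γ ≤ rhof α β x := by
  have hβ0 : 0 < β := lt_trans hα hαβ
  have hx1 : 0 < x/α - 1 := by rw [sub_pos, lt_div_iff₀ hα]; linarith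
  have hγ1 : 0 < γ/α - 1 := by rw [sub_pos, lt_div_iff₀ hα]; linarith
  rw [rhof, rhof, div_le_div_iff₀ hγ1 hx1]
  have hkey : (γ - x)*(1/β) ≤ (γ - x)*(1/α) := by
    apply mul_le_mul_of_nonneg_left _ (by linarith)
    exact one_div_le_one_div_of_le hα hαβ.le
  have e1 : x/α = x * (1/α) := by ring
  have e2 : γ/α = γ * (1/α) := by ring
  have e3 : x/β = x * (1/β) := by ring
  have e4 : γ/β = γ * (1/β) := by ring
  rw [e1, e2, e3, e4]
  nlinarith [hkey]

lemma Akx_mem (hα : 0 < α) (hαβ : α < β) (hβ : β < 1) {x γ : ℝ} (hαx : α ≤ x)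
    (hxβ : x < β) (hxγ : x < γ) (hγβ : γ ≤ β) :
    ∃ C₀ : ℝ, 0 ≤ C₀ ∧ ∀ k : ℕ, rhof α β γ * ((k:ℝ)+1) ≤ (Akx α β x k : ℝ) + C₀ := by
  have hαγ : α < γ := lt_of_le_of_lt hαx hxγ
  have hργ := rhof_nonneg hα hαβ hβ hαγ hγβ
  by_cases hxα : x ≤ α
  · refine ⟨rhof α β γ * rhof α β γ, by positivity, ?_⟩
    intro k
    rw [Akx, if_pos hxα]
    have h3 : (((k+1)^2 : ℕ):ℝ) = ((k:ℝ)+1)^2 := by push_cast; ring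
    rw [h3]
    rcases le_or_gt (rhof α β γ) ((k:ℝ)+1) with h | h
    · nlinarith
    · nlinarith [sq_nonneg ((k:ℝ)+1)]
  · push_neg at hxα
    have hρx := rhof_nonneg hα hαβ hβ hxα (le_of_lt hxβ)
    have hρρ := rhof_anti hα hαβ hxα hxγ.le hγβ
    refine ⟨rhof α β x * rhof α β x, by positivity, ?_⟩
    intro k
    rw [Akx, if_neg (not_le.mpr hxα)]
    have hk0 : (0:ℝ) ≤ (k:ℝ)+1 := by positivity
    have h4 : rhof α β γ * ((k:ℝ)+1) ≤ rhof α β x * ((k:ℝ)+1) :=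
      mul_le_mul_of_nonneg_right hρρ hk0
    rcases le_or_gt (rhof α β x) ((k:ℝ)+1) with h | h
    · have h1 : rhof α β x * ((k:ℝ)+1) ≤ (Nat.ceil (rhof α β x * ((k:ℝ)+1)) : ℝ) :=
        Nat.le_ceil _
      have h2 : rhof α β x * ((k:ℝ)+1) ≤ (((k+1)^2 : ℕ):ℝ) := by
        push_cast
        nlinarith
      have h3 : rhof α β x * ((k:ℝ)+1)
          ≤ ((min (Nat.ceil (rhof α β x * ((k:ℝ)+1))) ((k+1)^2) : ℕ):ℝ) := by
        rw [Nat.cast_min]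
        exact le_min h1 h2
      nlinarith [mul_self_nonneg (rhof α β x)]
    · have h5 : rhof α β x * ((k:ℝ)+1) ≤ rhof α β x * rhof α β x := by nlinarith
      have h6 : (0:ℝ) ≤ ((min (Nat.ceil (rhof α β x * ((k:ℝ)+1))) ((k+1)^2) : ℕ):ℝ) := by
        positivity
      linarith

lemma margin_identity (hα : 0 < α) (hαβ : α < β) (Ak : ℕ → ℕ) (γ : ℝ) (k : ℕ) :
    (((k:ℝ)+1) + (Ak k:ℝ)) * Real.log 2 - γ * Lam α β Ak k
      = (Ak k:ℝ)*(Real.log 2 - γ*La α) + ((k:ℝ)+1)*(Real.log 2 - γ*Lb β) := by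
  rw [Lam]
  ring

lemma Akx_vio (hα : 0 < α) (hαβ : α < β) (hβ : β < 1) {x γ : ℝ} (hαx : α ≤ x)
    (hxβ : x < β) (hγ0 : 0 ≤ γ) (hγx : γ < x) :
    Tendsto (fun k : ℕ =>
      (((k:ℝ)+1) + (Akx α β x k:ℝ)) * Real.log 2 - γ * Lam α β (Akx α β x) k)
      atTop atTop := by
  have hβ0 : 0 < β := lt_trans hα hαβ
  have hLa := La_pos (α := α) hα
  have hLb := Lb_pos (α := α) (β := β) hα hαβ
  have hlog2 := log2_pos
  set cb := Real.log 2 - γ * Lb β with hcb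
  set ca := Real.log 2 - γ * La α with hca
  have hcb0 : 0 < cb := by
    rw [hcb]
    have h1 : γ * Lb β < β * Lb β := mul_lt_mul_of_pos_right (by linarith) hLb
    have h2 : β * Lb β = Real.log 2 := by rw [Lb]; field_simp
    linarith
  rcases le_or_gt γ α with hγα | hγα
  · have hca0 : 0 ≤ ca := by
      rw [hca]
      have h1 : γ * La α ≤ α * La α := mul_le_mul_of_nonneg_right hγα hLa.le
      have h2 : α * La α = Real.log 2 := by rw [La]; field_simp
      linarith
    apply tendsto_atTop_mono _ (tendsto_linear cb 0 hcb0)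
    intro k
    rw [margin_identity hα hαβ]
    have h1 : 0 ≤ (Akx α β x k:ℝ)*ca := mul_nonneg (by positivity) hca0
    rw [← hca, ← hcb]
    linarith
  · have hxα : α < x := lt_trans hγα hγx
    have hne : ¬ x ≤ α := not_le.mpr hxα
    set ρx := rhof α β x with hρx
    have hρx0 : 0 ≤ ρx := rhof_nonneg hα hαβ hβ hxα (le_of_lt hxβ)
    have hca0 : ca ≤ 0 := by
      rw [hca]
      have h1 : α * La α ≤ γ * La α := mul_le_mul_of_nonneg_right hγα.le hLa.le
      have h2 : α * La α = Real.log 2 := by rw [La]; field_simp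
      linarith
    have hcstar : 0 < ρx * ca + cb := by
      have hkey : ρx * (x/α - 1) = 1 - x/β := rhof_key hα hxα
      have e1 : ρx * ca + cb
          = Real.log 2 * ((ρx * (1 - γ/α) + (1 - γ/β))) := by
        rw [hca, hcb, La, Lb]
        field_simp
      have e2 : ρx * (1 - x/α) + (1 - x/β) = 0 := by nlinarith [hkey]
      have e3 : ρx * (1 - γ/α) + (1 - γ/β) - (ρx * (1 - x/α) + (1 - x/β))
          = (x - γ) * (ρx/α + 1/β) := by field_simp; ring
      have e4 : 0 < (x - γ) * (ρx/α + 1/β) := by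
        apply mul_pos (by linarith)
        have : 0 < 1/β := by positivity
        positivity
      have e5 : 0 < ρx * (1 - γ/α) + (1 - γ/β) := by linarith [e3 ▸ e4]
      rw [e1]
      positivity
    apply tendsto_atTop_mono' atTop _ (tendsto_linear (ρx*ca + cb) ca hcstar)
    have hev : ∀ᶠ k : ℕ in atTop, (ρx:ℝ) ≤ ((k:ℝ)+1) := by
      filter_upwards [Filter.eventually_ge_atTop (Nat.ceil ρx)] with k hk
      have h1 : (Nat.ceil ρx : ℝ) ≤ (k:ℝ) := by exact_mod_cast hk
      have h2 := Nat.le_ceil ρx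
      linarith
    filter_upwards [hev] with k hk
    have hAle : (Akx α β x k : ℝ) ≤ ρx*((k:ℝ)+1) + 1 := by
      rw [Akx, if_neg hne]
      have h1 : (min (Nat.ceil (ρx*((k:ℝ)+1))) ((k+1)^2) : ℕ) ≤ Nat.ceil (ρx*((k:ℝ)+1)) :=
        min_le_left _ _
      have h2 : (Nat.ceil (ρx*((k:ℝ)+1)):ℝ) < ρx*((k:ℝ)+1) + 1 :=
        Nat.ceil_lt_add_one (by positivity)
      have h3 : ((min (Nat.ceil (ρx*((k:ℝ)+1))) ((k+1)^2) : ℕ):ℝ)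
          ≤ (Nat.ceil (ρx*((k:ℝ)+1)):ℝ) := by exact_mod_cast h1
      rw [hρx] at h3 ⊢
      linarith
    rw [margin_identity hα hαβ, ← hca, ← hcb]
    have h4 : (ρx*((k:ℝ)+1) + 1)*ca ≤ (Akx α β x k:ℝ)*ca :=
      mul_le_mul_of_nonpos_right hAle hca0
    nlinarith [h4]

lemma dim_Akx (hα : 0 < α) (hαβ : α < β) (hβ : β < 1) {x : ℝ} (hαx : α ≤ x)
    (hxβ : x < β) :
    upperPhiDim (Phi α β (Akx α β x)) (ESet (sc α β)) = x := by
  obtain ⟨d₀, hd₀⟩ := exists_d₀ hα hαβ hβ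
  rw [upperPhiDim_eq]
  apply sInf_interval_eq
  · intro γ hγ
    by_contra h
    push_neg at h
    rcases lt_or_ge γ α with hγα | hγα
    · exact not_mem_low hα hαβ hβ _ (Phi_nonneg hα hαβ _) γ hγα hγ
    · refine not_mem_Phi hα hαβ hβ (Akx_le_sq α β x) d₀ hd₀ γ (le_trans hα.le hγα) ?_ hγ
      exact Akx_vio hα hαβ hβ hαx hxβ (le_trans hα.le hγα) h
  · intro γ hγ
    rcases le_or_gt γ β with hγβ | hγβ
    · obtain ⟨C₀, hC₀0, hC₀⟩ := Akx_mem hα hαβ hβ hαx hxβ hγ hγβ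
      exact mem_of_Phi hα hαβ hβ γ (lt_of_le_of_lt hαx hγ) hγβ C₀ hC₀0 hC₀ d₀ hd₀
    · exact mem_triv hα hαβ hβ _ d₀ hd₀ γ hγβ

end akx

end PhiDimProof

/-- For any `0 < α < β < 1` there is a set `E ⊆ [0,1]` whose set of upper `Φ`-dimensions,
over all dimension functions `Φ` tending to `0`, is exactly `[α, β]`, with
`dim_qA E = α` and `dim_A E = β`. -/
theorem exists_set_with_interval_of_phiDims (α β : ℝ) (hα : 0 < α) (hαβ : α < β)
    (hβ : β < 1) :
    ∃ E : Set ℝ, E ⊆ Icc 0 1 ∧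
      {x : ℝ | ∃ Φ : ℝ → ℝ, IsDimensionFunction Φ ∧
          Tendsto Φ (nhdsWithin 0 (Ioo 0 1)) (nhds 0) ∧ upperPhiDim Φ E = x} = Icc α β ∧
      quasiAssouadDim E = α ∧ assouadDim E = β := by
  have hnice := PhiDimProof.nice_sc hα hαβ hβ
  refine ⟨PhiDimProof.ESet (PhiDimProof.sc α β), ?_, ?_, ?_, ?_⟩
  · rintro z ⟨ε, rfl⟩
    exact Set.mem_Icc.mpr ⟨PhiDimProof.cpt_nonneg hnice ε, PhiDimProof.cpt_le_one hnice ε⟩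
  · ext x
    simp only [Set.mem_setOf_eq, Set.mem_Icc]
    constructor
    · rintro ⟨Φ, hΦdim, hΦt, rfl⟩
      exact PhiDimProof.dim_between hα hαβ hβ Φ hΦdim.1
    · rintro ⟨hxα, hxβ'⟩
      rcases lt_or_eq_of_le hxβ' with hxb | hxb
      · exact ⟨PhiDimProof.Phi α β (PhiDimProof.Akx α β x),
          PhiDimProof.isDimFun_Phi hα hαβ hβ (PhiDimProof.Akx_mono hα hαβ hβ hxβ'),
          PhiDimProof.Phi_tendsto_zero hα hαβ hβ (PhiDimProof.Akx_le_sq α β x),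
          PhiDimProof.dim_Akx hα hαβ hβ hxα hxb⟩
      · exact ⟨fun _ => 0, PhiDimProof.isDimFun_zero, tendsto_const_nhds,
          by rw [hxb]; exact PhiDimProof.dim_zero hα hαβ hβ⟩
  · have hval : ∀ θ : Set.Ioo (0:ℝ) 1,
        upperAssouadSpectrum (θ:ℝ) (PhiDimProof.ESet (PhiDimProof.sc α β)) = α :=
      fun θ => PhiDimProof.dim_const hα hαβ hβ θ.2.1 θ.2.2
    rw [quasiAssouadDim]
    have h1 : (⨆ θ : Set.Ioo (0:ℝ) 1,
          upperAssouadSpectrum (θ:ℝ) (PhiDimProof.ESet (PhiDimProof.sc α β)))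
        = ⨆ _θ : Set.Ioo (0:ℝ) 1, α := by
      congr 1
      funext θ
      exact hval θ
    rw [h1]
    have : Nonempty (Set.Ioo (0:ℝ) 1) := ⟨⟨1/2, by norm_num⟩⟩
    exact ciSup_const
  · exact PhiDimProof.dim_zero hα hαβ hβ

end
end

section
/- Let a = (a_n) be a decreasing summable sequence with Σ_n a_n = 1, and let F and G be two compact sets in 𝒞_a (complementary sets of a). Then for every r > 0, 1/16 ≤ N_r(F)/N_r(G) ≤ 16. -/
open Set Metric Filter Topology
open scoped ENNReal

noncomputable section

/-- The total length of the gaps eventually removed from the `j`-th (`0`-indexed, left to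
right) step-`k` interval in the construction of the Cantor set associated with the gap
sequence `a` (where `a i` is the length of the `i`-th gap, `i ≥ 1`); this is the length of
that interval. -/
def cantorLen (a : ℕ → ℝ) (k j : ℕ) : ℝ :=
  ∑' m : ℕ, ∑ i ∈ Finset.range (2 ^ m), a (2 ^ (k + m) + j * 2 ^ m + i)

/-- `C` is the Cantor set associated with the gap sequence `a` (gaps `a 1, a 2, …`,
the gap removed at step `k+1` from the `j`-th (`0`-indexed) step-`k` interval having length
`a (2^k + j)`): there are left endpoints `L k j` of the step-`k` intervals, each interval
has length `cantorLen a k j`, the construction starts at `[0,1]` with `L 0 0 = 0`, and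
removing the appropriate gap from a step-`k` interval yields its two step-`(k+1)`
subintervals. -/
def IsCantorSetOf (a : ℕ → ℝ) (C : Set ℝ) : Prop :=
  ∃ L : ℕ → ℕ → ℝ, L 0 0 = 0 ∧
    (∀ k j, j < 2 ^ k → L (k + 1) (2 * j) = L k j) ∧
    (∀ k j, j < 2 ^ k →
      L (k + 1) (2 * j + 1) = L k j + cantorLen a (k + 1) (2 * j) + a (2 ^ k + j)) ∧
    C = ⋂ k : ℕ, ⋃ j ∈ Finset.range (2 ^ k), Icc (L k j) (L k j + cantorLen a k j)

/-- `s n = 2⁻ⁿ Σ_{j ≥ 2ⁿ} a j`, the average length of the step-`n` intervals. -/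
def sSeq (a : ℕ → ℝ) (n : ℕ) : ℝ :=
  ((2 : ℝ) ^ n)⁻¹ * ∑' i : ℕ, a (2 ^ n + i)

/-- The depth function `φ` associated with the dimension function `Φ` and the Cantor set
with gap sequence `a`: `φ n` is the minimal integer `j` with
`s (n + j) ≤ (s n) ^ (1 + Φ (s n))`. -/
def IsDepthFunction (a : ℕ → ℝ) (Φ : ℝ → ℝ) (φ : ℕ → ℕ) : Prop :=
  ∀ n : ℕ, IsLeast {j : ℕ | sSeq a (n + j) ≤ sSeq a n ^ (1 + Φ (sSeq a n))} (φ n)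

/-- The gap sequence of the central Cantor set with step lengths `s`: every gap of level
`n+1` (indices `2^n ≤ i < 2^(n+1)`) has length `s n - 2 * s (n+1)`. -/
def centralGaps (s : ℕ → ℝ) : ℕ → ℝ :=
  fun i => s (Nat.log 2 i) - 2 * s (Nat.log 2 i + 1)

/-- `E` is a central Cantor set with step lengths `s`: `s 0 = 1`, the ratios of dissection
`s (n+1) / s n` lie in `(0, 1/2)`, and `E` is the Cantor set whose step-`(n+1)` gaps all
have length `s n - 2 * s (n+1)`. -/
def IsCentralCantorSet (s : ℕ → ℝ) (E : Set ℝ) : Prop :=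
  s 0 = 1 ∧ (∀ n, 0 < s (n + 1) ∧ 2 * s (n + 1) < s n) ∧ IsCantorSetOf (centralGaps s) E

/-- `E` belongs to `𝒞_a`: `E = [0,1] \ ⋃ⱼ Uⱼ` for a disjoint family of open subintervals
`Uⱼ ⊆ [0,1]` with `length Uⱼ = a j` (`j ≥ 1`). -/
def IsComplementarySet (a : ℕ → ℝ) (E : Set ℝ) : Prop :=
  ∃ c : ℕ → ℝ, (∀ j, 0 ≤ c j ∧ c j + a (j + 1) ≤ 1) ∧
    (Pairwise fun i j =>
      Disjoint (Ioo (c i) (c i + a (i + 1))) (Ioo (c j) (c j + a (j + 1)))) ∧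
    E = Icc 0 1 \ ⋃ j : ℕ, Ioo (c j) (c j + a (j + 1))

/-- The decreasing rearrangement `D_a = {Σ_{i ≥ k} a i : k = 1, 2, …}`. -/
def decreasingSet (a : ℕ → ℝ) : Set ℝ :=
  Set.range fun k : ℕ => ∑' i : ℕ, a (k + 1 + i)


open MeasureTheory

section Aux

variable {a c : ℕ → ℝ} {E : Set ℝ}

lemma aux_core (hpos : ∀ j : ℕ, 0 < a (j + 1))
    (hc2 : Pairwise fun i j =>
      Disjoint (Ioo (c i) (c i + a (i + 1))) (Ioo (c j) (c j + a (j + 1))))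
    {i j : ℕ} (hij : i ≠ j) (h1 : c i < c j + a (j + 1)) (h2 : c j < c i + a (i + 1)) :
    False := by
  have hi := hpos i
  have hj := hpos j
  set lo := max (c i) (c j) with hlo
  set hi' := min (c i + a (i + 1)) (c j + a (j + 1)) with hhi
  have h3 : lo < hi' :=
    max_lt_iff.2 ⟨lt_min_iff.2 ⟨by linarith, h1⟩, lt_min_iff.2 ⟨h2, by linarith⟩⟩
  have hlo1 : c i ≤ lo := le_max_left _ _
  have hlo2 : c j ≤ lo := le_max_right _ _
  have hhi1 : hi' ≤ c i + a (i + 1) := min_le_left _ _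
  have hhi2 : hi' ≤ c j + a (j + 1) := min_le_right _ _
  have hp1 : (lo + hi') / 2 ∈ Ioo (c i) (c i + a (i + 1)) := ⟨by linarith, by linarith⟩
  have hp2 : (lo + hi') / 2 ∈ Ioo (c j) (c j + a (j + 1)) := ⟨by linarith, by linarith⟩
  exact Set.disjoint_left.mp (hc2 hij) hp1 hp2

lemma aux_sep (hpos : ∀ j : ℕ, 0 < a (j + 1))
    (hc2 : Pairwise fun i j =>
      Disjoint (Ioo (c i) (c i + a (i + 1))) (Ioo (c j) (c j + a (j + 1))))
    {i j : ℕ} (hij : i ≠ j) : c i + a (i + 1) ≤ c j ∨ c j + a (j + 1) ≤ c i := by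
  by_contra h
  push_neg at h
  exact aux_core hpos hc2 hij (by linarith [h.2]) (by linarith [h.1])

lemma aux_left_mem (hpos : ∀ j : ℕ, 0 < a (j + 1))
    (hc1 : ∀ j, 0 ≤ c j ∧ c j + a (j + 1) ≤ 1)
    (hc2 : Pairwise fun i j =>
      Disjoint (Ioo (c i) (c i + a (i + 1))) (Ioo (c j) (c j + a (j + 1))))
    (hc3 : E = Icc 0 1 \ ⋃ j : ℕ, Ioo (c j) (c j + a (j + 1))) (j : ℕ) :
    c j ∈ E := by
  rw [hc3]
  refine ⟨⟨(hc1 j).1, by linarith [(hc1 j).2, hpos j]⟩, ?_⟩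
  intro hmem
  obtain ⟨i, hi⟩ := mem_iUnion.1 hmem
  rcases eq_or_ne i j with rfl | hij
  · exact lt_irrefl _ hi.1
  · exact aux_core hpos hc2 hij (by linarith [hi.1, hpos j]) hi.2

lemma aux_right_mem (hpos : ∀ j : ℕ, 0 < a (j + 1))
    (hc1 : ∀ j, 0 ≤ c j ∧ c j + a (j + 1) ≤ 1)
    (hc2 : Pairwise fun i j =>
      Disjoint (Ioo (c i) (c i + a (i + 1))) (Ioo (c j) (c j + a (j + 1))))
    (hc3 : E = Icc 0 1 \ ⋃ j : ℕ, Ioo (c j) (c j + a (j + 1))) (j : ℕ) :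
    c j + a (j + 1) ∈ E := by
  rw [hc3]
  refine ⟨⟨by linarith [(hc1 j).1, hpos j], (hc1 j).2⟩, ?_⟩
  intro hmem
  obtain ⟨i, hi⟩ := mem_iUnion.1 hmem
  rcases eq_or_ne i j with rfl | hij
  · exact lt_irrefl _ hi.2
  · exact aux_core hpos hc2 hij hi.1 (by linarith [hi.2, hpos j])

lemma aux_zero_mem (hc1 : ∀ j, 0 ≤ c j ∧ c j + a (j + 1) ≤ 1)
    (hc3 : E = Icc 0 1 \ ⋃ j : ℕ, Ioo (c j) (c j + a (j + 1))) :
    (0 : ℝ) ∈ E := by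
  rw [hc3]
  refine ⟨⟨le_refl _, zero_le_one⟩, ?_⟩
  intro hmem
  obtain ⟨i, hi⟩ := mem_iUnion.1 hmem
  linarith [(hc1 i).1, hi.1]

lemma aux_subset_Icc (hc3 : E = Icc 0 1 \ ⋃ j : ℕ, Ioo (c j) (c j + a (j + 1))) :
    E ⊆ Icc (0:ℝ) 1 := by
  rw [hc3]; exact diff_subset

lemma aux_vol_zero (hpos : ∀ j : ℕ, 0 < a (j + 1))
    (hsum : Summable fun j : ℕ => a (j + 1)) (htot : ∑' j : ℕ, a (j + 1) = 1)
    (hc1 : ∀ j, 0 ≤ c j ∧ c j + a (j + 1) ≤ 1)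
    (hc2 : Pairwise fun i j =>
      Disjoint (Ioo (c i) (c i + a (i + 1))) (Ioo (c j) (c j + a (j + 1))))
    (hc3 : E = Icc 0 1 \ ⋃ j : ℕ, Ioo (c j) (c j + a (j + 1))) :
    volume E = 0 := by
  have hU : (⋃ j : ℕ, Ioo (c j) (c j + a (j + 1))) ⊆ Icc (0:ℝ) 1 := by
    refine iUnion_subset fun j x hx => ⟨le_trans (hc1 j).1 hx.1.le, le_trans hx.2.le (hc1 j).2⟩
  have hUvol : volume (⋃ j : ℕ, Ioo (c j) (c j + a (j + 1))) = 1 := by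
    rw [measure_iUnion hc2 fun j => measurableSet_Ioo]
    have h1 : ∀ j : ℕ, volume (Ioo (c j) (c j + a (j + 1))) = ENNReal.ofReal (a (j + 1)) := by
      intro j; rw [Real.volume_Ioo]; congr 1; ring
    rw [tsum_congr h1, ← ENNReal.ofReal_tsum_of_nonneg (fun j => (hpos j).le) hsum, htot,
      ENNReal.ofReal_one]
  rw [hc3, measure_diff hU (MeasurableSet.iUnion fun j => measurableSet_Ioo).nullMeasurableSet
    (by rw [hUvol]; exact ENNReal.one_ne_top), hUvol, Real.volume_Icc]
  norm_num

end Aux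

lemma quad_card_le (x y z w : ℕ) : ({x, y, z, w} : Finset ℕ).card ≤ 4 := by
  have h1 := Finset.card_insert_le x ({y, z, w} : Finset ℕ)
  have h2 := Finset.card_insert_le y ({z, w} : Finset ℕ)
  have h3 := Finset.card_insert_le z ({w} : Finset ℕ)
  simp only [Finset.card_singleton] at *
  omega

set_option maxHeartbeats 2000000 in
lemma aux_master (a : ℕ → ℝ)
    (hpos : ∀ j : ℕ, 0 < a (j + 1)) (hdec : ∀ j : ℕ, a (j + 2) ≤ a (j + 1))
    (hsum : Summable fun j : ℕ => a (j + 1)) (htot : ∑' j : ℕ, a (j + 1) = 1)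
    (F G : Set ℝ) (hF : IsComplementarySet a F) (hG : IsComplementarySet a G)
    (r : ℝ) (hr : 0 < r) :
    coverNumber r F ≤ 16 * coverNumber r G := by
  classical
  obtain ⟨c, hc1, hc2, hc3⟩ := hF
  obtain ⟨d, hd1, hd2, hd3⟩ := hG
  have h2r : (0:ℝ) < 2 * r := by linarith
  have hanti : Antitone fun j : ℕ => a (j + 1) := antitone_nat_of_succ_le fun k => hdec k
  have hex : ∃ m : ℕ, a (m + 1) ≤ 2 * r := by
    have htend : Tendsto (fun j : ℕ => a (j + 1)) atTop (nhds 0) := hsum.tendsto_atTop_zero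
    exact (htend.eventually (eventually_le_nhds h2r)).exists
  obtain ⟨n, hnle, hnlt⟩ : ∃ n : ℕ, a (n + 1) ≤ 2 * r ∧ ∀ j < n, 2 * r < a (j + 1) :=
    ⟨Nat.find hex, Nat.find_spec hex, fun j hj => lt_of_not_ge (Nat.find_min hex hj)⟩
  have hshort : ∀ j, n ≤ j → a (j + 1) ≤ 2 * r := fun j hj => le_trans (hanti hj) hnle
  set T := ∑' i : ℕ, a (i + n + 1) with hT
  have hTnonneg : 0 ≤ T := tsum_nonneg fun i => (hpos _).le
  have hsplit : ∑ j ∈ Finset.range n, a (j + 1) + T = 1 := by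
    rw [hT, ← htot]
    have := Summable.sum_add_tsum_nat_add (f := fun j : ℕ => a (j + 1)) n hsum
    simpa using this
  have hFsub : F ⊆ Icc (0:ℝ) 1 := aux_subset_Icc hc3
  have hGsub : G ⊆ Icc (0:ℝ) 1 := aux_subset_Icc hd3
  have hFvol : volume F = 0 := aux_vol_zero hpos hsum htot hc1 hc2 hc3
  -- grid
  set J : ℕ → Set ℝ := fun k => Icc (2*r*k) (2*r*(k+1)) with hJ
  set S : Finset ℕ := (Finset.range (Nat.floor (1/(2*r)) + 1)).filter
      (fun k => (J k ∩ F).Nonempty) with hS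
  -- the grid cover
  have hcover : F ⊆ ⋃ x ∈ S.image (fun k : ℕ => 2*r*k + r), closedBall x r := by
    intro y hy
    have hy01 := hFsub hy
    set k := Nat.floor (y/(2*r)) with hk
    have hky : 2*r*(k:ℝ) ≤ y := by
      have h := Nat.floor_le (div_nonneg hy01.1 h2r.le)
      rw [le_div_iff₀ h2r] at h
      linarith
    have hyk : y ≤ 2*r*((k:ℝ)+1) := by
      have h := (Nat.lt_floor_add_one (y/(2*r))).le
      rw [div_le_iff₀ h2r] at h
      linarith
    have hkS : k ∈ S := by
      rw [hS, Finset.mem_filter, Finset.mem_range]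
      refine ⟨Nat.lt_succ_of_le (Nat.floor_le_floor ?_), ⟨y, ⟨hky, by push_cast; linarith⟩, hy⟩⟩
      gcongr
      exact hy01.2
    refine mem_iUnion₂.2 ⟨2*r*(k:ℝ) + r, Finset.mem_image_of_mem _ hkS, ?_⟩
    rw [Real.closedBall_eq_Icc]
    constructor <;> push_cast <;> linarith
  have hcov_le : coverNumber r F ≤ (S.card : ℝ≥0∞) := by
    refine le_trans (iInf₂_le (S.image (fun k : ℕ => 2*r*k + r)) hcover) ?_
    exact Nat.cast_le.2 Finset.card_image_le
  set S1 : Finset ℕ := S.filter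
      (fun k => ∃ j < n, (J k ∩ Ioo (c j) (c j + a (j+1))).Nonempty) with hS1d
  set S2 : Finset ℕ := S.filter (fun k => 1 < 2*r*(k+1)) with hS2d
  set S3 : Finset ℕ := (S \ S1) \ S2 with hS3d
  have hcard : S.card ≤ S1.card + S2.card + S3.card := by
    have hsub : S ⊆ (S1 ∪ S2) ∪ S3 := by
      intro k hk
      rw [Finset.mem_union, Finset.mem_union]
      by_cases h1 : k ∈ S1
      · exact Or.inl (Or.inl h1)
      by_cases h2 : k ∈ S2
      · exact Or.inl (Or.inr h2)
      · refine Or.inr ?_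
        rw [hS3d, Finset.mem_sdiff, Finset.mem_sdiff]
        exact ⟨⟨hk, h1⟩, h2⟩
    calc S.card ≤ ((S1 ∪ S2) ∪ S3).card := Finset.card_le_card hsub
    _ ≤ (S1 ∪ S2).card + S3.card := Finset.card_union_le _ _
    _ ≤ S1.card + S2.card + S3.card := add_le_add_left (Finset.card_union_le _ _) _
  have hS1card : S1.card ≤ 4 * n := by
    have hsub : S1 ⊆ (Finset.range n).biUnion (fun j =>
        {Nat.floor (c j / (2*r)), Nat.floor (c j / (2*r)) - 1,
         Nat.floor ((c j + a (j+1)) / (2*r)), Nat.floor ((c j + a (j+1)) / (2*r)) - 1}) := by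
      intro k hk
      rw [hS1d, Finset.mem_filter] at hk
      obtain ⟨hkS, j, hjn, p, hpJ, hpg⟩ := hk
      rw [hS, Finset.mem_filter] at hkS
      obtain ⟨-, e, heJ, heF⟩ := hkS
      have heg : e ∉ Ioo (c j) (c j + a (j+1)) := by
        intro h
        rw [hc3] at heF
        exact heF.2 (mem_iUnion.2 ⟨j, h⟩)
      have key : ∃ x, x ∈ J k ∧ (x = c j ∨ x = c j + a (j+1)) := by
        rcases le_or_gt e (c j) with h | h
        · exact ⟨c j, ⟨le_trans heJ.1 h, le_trans hpg.1.le hpJ.2⟩, Or.inl rfl⟩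
        · have h2 : c j + a (j+1) ≤ e := by
            by_contra hlt
            push_neg at hlt
            exact heg ⟨h, hlt⟩
          exact ⟨c j + a (j+1), ⟨le_trans hpJ.1 hpg.2.le, le_trans h2 heJ.2⟩, Or.inr rfl⟩
      obtain ⟨x, hxJ, hxeq⟩ := key
      have hk1 : k ≤ Nat.floor (x/(2*r)) := by
        refine Nat.le_floor ?_
        rw [le_div_iff₀ h2r]
        have := hxJ.1
        push_cast
        linarith
      have hk2 : Nat.floor (x/(2*r)) ≤ k + 1 := by
        have hle : x/(2*r) ≤ ((k+1 : ℕ) : ℝ) := by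
          rw [div_le_iff₀ h2r]
          have := hxJ.2
          push_cast
          linarith
        have := Nat.floor_le_floor hle
        rwa [Nat.floor_natCast] at this
      refine Finset.mem_biUnion.2 ⟨j, Finset.mem_range.2 hjn, ?_⟩
      rcases hxeq with rfl | rfl <;> · simp only [Finset.mem_insert, Finset.mem_singleton]; omega
    refine le_trans (Finset.card_le_card hsub) (le_trans (Finset.card_biUnion_le) ?_)
    refine le_trans (Finset.sum_le_sum (fun j _ => quad_card_le _ _ _ _)) ?_
    rw [Finset.sum_const, smul_eq_mul, Finset.card_range]
    omega
  have hS2card : S2.card ≤ 1 := by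
    have hsub : S2 ⊆ {Nat.floor (1/(2*r))} := by
      intro k hk
      rw [hS2d, Finset.mem_filter] at hk
      obtain ⟨hkS, hk2⟩ := hk
      rw [hS, Finset.mem_filter] at hkS
      obtain ⟨-, y, hyJ, hyF⟩ := hkS
      have hy1 : y ≤ 1 := (hFsub hyF).2
      have h1 : k ≤ Nat.floor (1/(2*r)) := by
        refine Nat.le_floor ?_
        rw [le_div_iff₀ h2r]
        have := hyJ.1
        nlinarith
      have h2 : Nat.floor (1/(2*r)) ≤ k := by
        have hfl : (Nat.floor (1/(2*r)) : ℝ) ≤ 1/(2*r) := Nat.floor_le (by positivity)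
        have hlt : 1/(2*r) < (k:ℝ)+1 := by
          rw [div_lt_iff₀ h2r]
          nlinarith
        have hcast : (Nat.floor (1/(2*r)) : ℝ) < (k:ℝ) + 1 := lt_of_le_of_lt hfl hlt
        have : Nat.floor (1/(2*r)) < k + 1 := by exact_mod_cast hcast
        omega
      simp only [Finset.mem_singleton]
      omega
    exact le_trans (Finset.card_le_card hsub) (by simp)
  have hIooDisj : ∀ k k' : ℕ, k ≠ k' →
      Disjoint (Ioo (2*r*(k:ℝ)) (2*r*((k:ℝ)+1))) (Ioo (2*r*(k':ℝ)) (2*r*((k':ℝ)+1))) := by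
    intro k k' hkk'
    rw [Set.Ioo_disjoint_Ioo]
    rcases lt_or_gt_of_ne hkk' with h | h
    · have hcast : (k:ℝ)+1 ≤ (k':ℝ) := by exact_mod_cast h
      calc min (2*r*((k:ℝ)+1)) (2*r*((k':ℝ)+1)) ≤ 2*r*((k:ℝ)+1) := min_le_left _ _
      _ ≤ 2*r*(k':ℝ) := by nlinarith
      _ ≤ max (2*r*(k:ℝ)) (2*r*(k':ℝ)) := le_max_right _ _
    · have hcast : (k':ℝ)+1 ≤ (k:ℝ) := by exact_mod_cast h
      calc min (2*r*((k:ℝ)+1)) (2*r*((k':ℝ)+1)) ≤ 2*r*((k':ℝ)+1) := min_le_right _ _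
      _ ≤ 2*r*(k:ℝ) := by nlinarith
      _ ≤ max (2*r*(k:ℝ)) (2*r*(k':ℝ)) := le_max_left _ _
  have hS3card : (S3.card : ℝ) * (2*r) ≤ T := by
    have hsub3 : ∀ k ∈ S3, Ioo (2*r*(k:ℝ)) (2*r*((k:ℝ)+1)) ⊆
        F ∪ ⋃ m : ℕ, (Ioo (2*r*(k:ℝ)) (2*r*((k:ℝ)+1)) ∩ Ioo (c (n+m)) (c (n+m) + a (n+m+1))) := by
      intro k hk y hy
      rw [hS3d, Finset.mem_sdiff, Finset.mem_sdiff] at hk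
      obtain ⟨⟨hkS, hk1⟩, hk2⟩ := hk
      have hkle : 2*r*((k:ℝ)+1) ≤ 1 := by
        by_contra h
        push_neg at h
        refine hk2 ?_
        rw [hS2d, Finset.mem_filter]
        exact ⟨hkS, by push_cast; linarith⟩
      have hy01 : y ∈ Icc (0:ℝ) 1 := ⟨le_trans (by positivity) hy.1.le, le_trans hy.2.le hkle⟩
      by_cases hyF : y ∈ F
      · exact Or.inl hyF
      right
      have hyU : y ∈ ⋃ j : ℕ, Ioo (c j) (c j + a (j+1)) := by
        by_contra h
        exact hyF (hc3 ▸ ⟨hy01, h⟩)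
      obtain ⟨j, hj⟩ := mem_iUnion.1 hyU
      have hjn : n ≤ j := by
        by_contra h
        push_neg at h
        refine hk1 ?_
        rw [hS1d, Finset.mem_filter]
        exact ⟨hkS, j, h, y, ⟨hy.1.le, hy.2.le⟩, hj⟩
      refine mem_iUnion.2 ⟨j - n, hy, ?_⟩
      rwa [Nat.add_sub_cancel' hjn]
    have key : (S3.card : ℝ≥0∞) * ENNReal.ofReal (2*r) ≤ ENNReal.ofReal T := by
      have step1 : ∀ k ∈ S3, ENNReal.ofReal (2*r) ≤
          ∑' m : ℕ, volume (Ioo (2*r*(k:ℝ)) (2*r*((k:ℝ)+1)) ∩ Ioo (c (n+m)) (c (n+m) + a (n+m+1))) := by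
        intro k hk
        have h1 : volume (Ioo (2*r*(k:ℝ)) (2*r*((k:ℝ)+1))) = ENNReal.ofReal (2*r) := by
          rw [Real.volume_Ioo]
          congr 1
          ring
        calc ENNReal.ofReal (2*r) = volume (Ioo (2*r*(k:ℝ)) (2*r*((k:ℝ)+1))) := h1.symm
        _ ≤ volume (F ∪ ⋃ m : ℕ, (Ioo (2*r*(k:ℝ)) (2*r*((k:ℝ)+1)) ∩ Ioo (c (n+m)) (c (n+m) + a (n+m+1)))) :=
            measure_mono (hsub3 k hk)
        _ ≤ volume F + volume (⋃ m : ℕ, (Ioo (2*r*(k:ℝ)) (2*r*((k:ℝ)+1)) ∩ Ioo (c (n+m)) (c (n+m) + a (n+m+1)))) :=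
            measure_union_le _ _
        _ ≤ 0 + ∑' m : ℕ, volume (Ioo (2*r*(k:ℝ)) (2*r*((k:ℝ)+1)) ∩ Ioo (c (n+m)) (c (n+m) + a (n+m+1))) := by
            rw [hFvol]
            exact add_le_add_right (measure_iUnion_le _) 0
        _ = ∑' m : ℕ, volume (Ioo (2*r*(k:ℝ)) (2*r*((k:ℝ)+1)) ∩ Ioo (c (n+m)) (c (n+m) + a (n+m+1))) :=
            zero_add _
      calc (S3.card : ℝ≥0∞) * ENNReal.ofReal (2*r)
          = ∑ k ∈ S3, ENNReal.ofReal (2*r) := by rw [Finset.sum_const, nsmul_eq_mul]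
      _ ≤ ∑ k ∈ S3, ∑' m : ℕ, volume (Ioo (2*r*(k:ℝ)) (2*r*((k:ℝ)+1)) ∩ Ioo (c (n+m)) (c (n+m)+a (n+m+1))) :=
          Finset.sum_le_sum step1
      _ = ∑' m : ℕ, ∑ k ∈ S3, volume (Ioo (2*r*(k:ℝ)) (2*r*((k:ℝ)+1)) ∩ Ioo (c (n+m)) (c (n+m)+a (n+m+1))) :=
          (Summable.tsum_finsetSum (fun k _ => ENNReal.summable)).symm
      _ ≤ ∑' m : ℕ, volume (Ioo (c (n+m)) (c (n+m)+a (n+m+1))) := by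
          refine Summable.tsum_le_tsum (fun m => ?_) ENNReal.summable ENNReal.summable
          rw [← measure_biUnion_finset (fun k _ k' _ hkk' =>
              Disjoint.mono inter_subset_left inter_subset_left (hIooDisj k k' hkk'))
            (fun k _ => (measurableSet_Ioo.inter measurableSet_Ioo))]
          exact measure_mono (iUnion₂_subset fun k _ => inter_subset_right)
      _ = ∑' m : ℕ, ENNReal.ofReal (a (n+m+1)) := by
          refine tsum_congr fun m => ?_
          rw [Real.volume_Ioo]
          congr 1
          ring
      _ = ENNReal.ofReal T := by
          have hsum' : Summable fun m : ℕ => a (m + n + 1) := by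
            have := (summable_nat_add_iff (f := fun j : ℕ => a (j + 1)) n).2 hsum
            exact this
          rw [hT, ENNReal.ofReal_tsum_of_nonneg (fun m => (hpos _).le) hsum']
          refine tsum_congr fun m => ?_
          congr 2
          omega
    have hcast : ((S3.card : ℝ≥0∞)) * ENNReal.ofReal (2*r) = ENNReal.ofReal ((S3.card : ℝ) * (2*r)) := by
      rw [ENNReal.ofReal_mul (Nat.cast_nonneg _), ENNReal.ofReal_natCast]
    rw [hcast] at key
    rwa [ENNReal.ofReal_le_ofReal_iff hTnonneg] at key
  -- lower bounds
  have main : ∀ t : Finset ℝ, G ⊆ ⋃ x ∈ t, closedBall x r →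
      coverNumber r F ≤ 16 * (t.card : ℝ≥0∞) := by
    intro t ht
    have hdmem : ∀ j : ℕ, d j ∈ G := aux_left_mem hpos hd1 hd2 hd3
    have hchoose : ∀ j : ℕ, ∃ x ∈ t, d j ∈ closedBall x r := by
      intro j
      simpa using mem_iUnion₂.1 (ht (hdmem j))
    have htne : 1 ≤ t.card := by
      obtain ⟨x, hxt, _⟩ := hchoose 0
      exact Finset.card_pos.2 ⟨x, hxt⟩
    have hnt : n ≤ t.card := by
      have hinj : Set.InjOn (fun j => (hchoose j).choose) ↑(Finset.range n) := by
        intro i hi j hj hij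
        by_contra hne
        have hsep := aux_sep hpos hd2 hne
        have hdi := (hchoose i).choose_spec.2
        have hdj := (hchoose j).choose_spec.2
        rw [mem_closedBall, Real.dist_eq] at hdi hdj
        simp only at hij
        rw [hij] at hdi
        have h1 := abs_le.1 hdi
        have h2 := abs_le.1 hdj
        have hi' := hnlt i (Finset.mem_range.1 hi)
        have hj' := hnlt j (Finset.mem_range.1 hj)
        rcases hsep with h | h <;> linarith [h1.1, h1.2, h2.1, h2.2]
      have := Finset.card_le_card_of_injOn (fun j => (hchoose j).choose)
        (fun j _ => (hchoose j).choose_spec.1) hinj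
      simpa using this
    have hTt : T ≤ (t.card : ℝ) * (6*r) := by
      have hicc : Icc (0:ℝ) 1 ⊆
          (⋃ j ∈ Finset.range n, Ioo (d j) (d j + a (j+1))) ∪ ⋃ x ∈ t, closedBall x (3*r) := by
        intro y hy
        by_cases hyG : y ∈ G
        · obtain ⟨x, hxt, hx⟩ := mem_iUnion₂.1 (ht hyG)
          exact Or.inr (mem_iUnion₂.2 ⟨x, hxt, closedBall_subset_closedBall (by linarith) hx⟩)
        have hyU : y ∈ ⋃ j : ℕ, Ioo (d j) (d j + a (j+1)) := by
          by_contra h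
          exact hyG (hd3 ▸ ⟨hy, h⟩)
        obtain ⟨j, hj⟩ := mem_iUnion.1 hyU
        rcases lt_or_ge j n with h | h
        · exact Or.inl (mem_iUnion₂.2 ⟨j, Finset.mem_range.2 h, hj⟩)
        · obtain ⟨x, hxt, hx⟩ := hchoose j
          refine Or.inr (mem_iUnion₂.2 ⟨x, hxt, ?_⟩)
          rw [mem_closedBall, Real.dist_eq] at hx ⊢
          have haj : a (j+1) ≤ 2*r := hshort j h
          have h1 := abs_le.1 hx
          rw [abs_le]
          exact ⟨by linarith [hj.1, hj.2, h1.1, h1.2], by linarith [hj.1, hj.2, h1.1, h1.2]⟩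
      have hle : ENNReal.ofReal 1 ≤
          ENNReal.ofReal ((∑ j ∈ Finset.range n, a (j+1)) + (t.card : ℝ) * (6*r)) := by
        calc ENNReal.ofReal 1 = volume (Icc (0:ℝ) 1) := by rw [Real.volume_Icc]; norm_num
        _ ≤ volume ((⋃ j ∈ Finset.range n, Ioo (d j) (d j + a (j+1))) ∪ ⋃ x ∈ t, closedBall x (3*r)) :=
            measure_mono hicc
        _ ≤ volume (⋃ j ∈ Finset.range n, Ioo (d j) (d j + a (j+1))) + volume (⋃ x ∈ t, closedBall x (3*r)) :=
            measure_union_le _ _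
        _ ≤ (∑ j ∈ Finset.range n, volume (Ioo (d j) (d j + a (j+1)))) + ∑ x ∈ t, volume (closedBall x (3*r)) :=
            add_le_add (measure_biUnion_finset_le _ _) (measure_biUnion_finset_le _ _)
        _ = (∑ j ∈ Finset.range n, ENNReal.ofReal (a (j+1))) + ∑ x ∈ t, ENNReal.ofReal (6*r) := by
            congr 1
            · exact Finset.sum_congr rfl fun j _ => by rw [Real.volume_Ioo]; congr 1; ring
            · exact Finset.sum_congr rfl fun x _ => by rw [Real.volume_closedBall]; congr 1; ring
        _ = ENNReal.ofReal ((∑ j ∈ Finset.range n, a (j+1)) + (t.card : ℝ) * (6*r)) := by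
            rw [ENNReal.ofReal_add (Finset.sum_nonneg fun j _ => (hpos j).le) (by positivity),
              ENNReal.ofReal_sum_of_nonneg (fun j _ => (hpos j).le), Finset.sum_const, nsmul_eq_mul,
              ENNReal.ofReal_mul (Nat.cast_nonneg _), ENNReal.ofReal_natCast]
      rw [ENNReal.ofReal_le_ofReal_iff
        (add_nonneg (Finset.sum_nonneg fun j _ => (hpos j).le) (by positivity))] at hle
      linarith [hsplit]
    -- combine
    have hcardR : (S.card : ℝ) ≤ 16 * t.card := by
      have e1 : (S1.card : ℝ) ≤ 4 * n := by exact_mod_cast hS1card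
      have e2 : (S2.card : ℝ) ≤ 1 := by exact_mod_cast hS2card
      have e3 : (S3.card : ℝ) ≤ 3 * t.card := by
        nlinarith [hS3card, hTt, hr]
      have e4 : (n : ℝ) ≤ t.card := by exact_mod_cast hnt
      have e5 : (1 : ℝ) ≤ t.card := by exact_mod_cast htne
      have e0 : (S.card : ℝ) ≤ S1.card + S2.card + S3.card := by exact_mod_cast hcard
      linarith
    have hcardN : S.card ≤ 16 * t.card := by exact_mod_cast hcardR
    refine le_trans hcov_le ?_
    calc (S.card : ℝ≥0∞) ≤ ((16 * t.card : ℕ) : ℝ≥0∞) := by exact_mod_cast hcardN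
    _ = 16 * (t.card : ℝ≥0∞) := by push_cast; ring
  have hdiv : coverNumber r F / 16 ≤ coverNumber r G :=
    le_iInf₂ fun t ht => ENNReal.div_le_of_le_mul' (main t ht)
  rwa [ENNReal.div_le_iff_le_mul (Or.inl (by norm_num)) (Or.inl (by norm_num)),
    mul_comm] at hdiv

/-- Any two complementary sets of a decreasing summable sequence have comparable covering
numbers: `1/16 ≤ N_r(F)/N_r(G) ≤ 16` for every `r > 0`. -/
theorem coverNumber_complementarySets_comparable (a : ℕ → ℝ)
    (hpos : ∀ j : ℕ, 0 < a (j + 1)) (hdec : ∀ j : ℕ, a (j + 2) ≤ a (j + 1))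
    (hsum : Summable fun j : ℕ => a (j + 1)) (htot : ∑' j : ℕ, a (j + 1) = 1)
    (F G : Set ℝ) (hF : IsComplementarySet a F) (hG : IsComplementarySet a G)
    (r : ℝ) (hr : 0 < r) :
    coverNumber r F ≤ 16 * coverNumber r G ∧ coverNumber r G ≤ 16 * coverNumber r F :=
  ⟨aux_master a hpos hdec hsum htot F G hF hG r hr,
   aux_master a hpos hdec hsum htot G F hG hF r hr⟩

end
end
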